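/- arXiv:1504.00997 — 9 statements merged into one kernel-verified Lean document; each statement's English description precedes it below -/
import Mathlib

section
/- For every n ≥ 4 and every 2 ≤ j ≤ n−2, the number of standard Young tableaux of shape (j, 2, 1^{n−j−2}) equals the number of pairs (W, a) where W is a j-element subset of {1,...,n} and a is a non-minimal element of the set m(W), where m(W) is the set of minima of the connected components of C_n[W] if 1 ∉ W, and the set of minima of the connected components of C_n[complement of W] if 1 ∈ W. -/
open scoped Classical

noncomputable section

/-- The cycle graph `C_n` on vertex set `{1,...,n}` (as a graph on `ℕ`):
`i ~ j` iff both lie in `{1,...,n}` and `i - j ≡ ±1 (mod n)`. -/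
def cycleGraph (n : ℕ) : SimpleGraph ℕ where
  Adj i j := i ∈ Set.Icc 1 n ∧ j ∈ Set.Icc 1 n ∧ i ≠ j ∧
    ((i + 1) % n = j % n ∨ (j + 1) % n = i % n)
  symm := ⟨fun i j h => ⟨h.2.1, h.1, h.2.2.1.symm, h.2.2.2.symm⟩⟩
  loopless := ⟨fun i h => h.2.2.1 rfl⟩

/-- Number of connected components of the induced subgraph `C_n[W]`. -/
def numComponents (n : ℕ) (W : Set ℕ) : ℕ :=
  Nat.card ((cycleGraph n).induce W).ConnectedComponent

/-- The set of minima of the connected components of `C_n[W]`. -/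
def compMins (n : ℕ) (W : Set ℕ) : Set ℕ :=
  {a | ∃ ha : a ∈ W, ∀ b, ∀ hb : b ∈ W,
    ((cycleGraph n).induce W).Reachable ⟨a, ha⟩ ⟨b, hb⟩ → a ≤ b}

/-- `m(W)`: component minima of `C_n[complement of W]` if `1 ∈ W`,
of `C_n[W]` otherwise. -/
def mSet (n : ℕ) (W : Set ℕ) : Set ℕ :=
  if 1 ∈ W then compMins n (Set.Icc 1 n \ W) else compMins n W

/-- The cells of the Young diagram of shape `(j, 2, 1^{n-j-2})`, 0-indexed:
row `0` has `j` boxes, row `1` has `2` boxes, rows `2,...,n-j-1` have one box. -/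
def cell (n j : ℕ) (p : ℕ × ℕ) : Prop :=
  (p.1 = 0 ∧ p.2 < j) ∨ (p.1 = 1 ∧ p.2 < 2) ∨ (2 ≤ p.1 ∧ p.1 < n - j ∧ p.2 = 0)

/-- `T` is a standard Young tableau of shape `(j, 2, 1^{n-j-2})`:
zero outside the diagram, a bijection from the cells onto `{1,...,n}`,
strictly increasing along rows and columns. -/
def IsSYT (n j : ℕ) (T : ℕ × ℕ → ℕ) : Prop :=
  (∀ p, ¬ cell n j p → T p = 0) ∧
  Set.BijOn T {p | cell n j p} (Set.Icc 1 n) ∧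
  (∀ p q : ℕ × ℕ, cell n j p → cell n j q → p.1 = q.1 → p.2 < q.2 → T p < T q) ∧
  (∀ p q : ℕ × ℕ, cell n j p → cell n j q → p.2 = q.2 → p.1 < q.1 → T p < T q)

/-- `a_T = T(2,2)` (0-indexed: the entry at position `(1,1)`). -/
def aT (T : ℕ × ℕ → ℕ) : ℕ := T (1, 1)

/-- `W_T`: the set of first-row entries of `T` if `a_T - 1` lies in the first row,
and `{T(2,2)} ∪ {T(1,i) : 2 ≤ i ≤ j}` if `a_T - 1` lies in the first column. -/
def WT (j : ℕ) (T : ℕ × ℕ → ℕ) : Set ℕ :=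
  if ∃ c < j, T (0, c) = T (1, 1) - 1 then T '' {p : ℕ × ℕ | p.1 = 0 ∧ p.2 < j}
  else {T (1, 1)} ∪ T '' {p : ℕ × ℕ | p.1 = 0 ∧ 1 ≤ p.2 ∧ p.2 < j}

/-- The filling with the elements of `W` in increasing order in the first row,
`a` at position `(2,2)`, and the elements of `({1,...,n} \ W) \ {a}` in increasing
order in the remaining boxes of the first column. -/
def fillRow (n j : ℕ) (W : Set ℕ) (a : ℕ) : ℕ × ℕ → ℕ := fun p =>
  if p.1 = 0 ∧ p.2 < j then Nat.nth (· ∈ W) p.2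
  else if p = (1, 1) then a
  else if p.2 = 0 ∧ 1 ≤ p.1 ∧ p.1 < n - j then
    Nat.nth (· ∈ (Set.Icc 1 n \ W) \ {a}) (p.1 - 1)
  else 0

/-- The filling with the elements of `{1,...,n} \ W` in increasing order in the
first column, `a` at position `(2,2)`, and the elements of `W \ {a}` in increasing
order in the remaining boxes of the first row. -/
def fillCol (n j : ℕ) (W : Set ℕ) (a : ℕ) : ℕ × ℕ → ℕ := fun p =>
  if p.2 = 0 ∧ p.1 < n - j then Nat.nth (· ∈ Set.Icc 1 n \ W) p.1
  else if p = (1, 1) then a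
  else if p.1 = 0 ∧ 1 ≤ p.2 ∧ p.2 < j then Nat.nth (· ∈ W \ {a}) (p.2 - 1)
  else 0

/-- `S(j,n)`: pairs `(W, a)` with `W` a `j`-subset of `{1,...,n}` and `a` a
non-minimal element of `m(W)`. -/
def SpairSet (n j : ℕ) : Set (Set ℕ × ℕ) :=
  {p | p.1 ⊆ Set.Icc 1 n ∧ p.1.ncard = j ∧ p.2 ∈ mSet n p.1 ∧ p.2 ≠ sInf (mSet n p.1)}

end

section Aux
variable {n j : ℕ}

theorem modlem {n x y : ℕ} (hn : 2 ≤ n) (hx : 1 ≤ x) (hx2 : x ≤ n) (hy : 1 ≤ y) (hy2 : y ≤ n) :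
    (x+1) % n = y % n ↔ (y = x + 1 ∨ (x = n ∧ y = 1)) := by
  have hym : y % n = if y = n then 0 else y := by
    by_cases h2 : y = n
    · rw [if_pos h2, h2, Nat.mod_self]
    · rw [if_neg h2]; exact Nat.mod_eq_of_lt (by omega)
  by_cases h1 : x = n
  · rw [h1, Nat.add_mod_left, Nat.mod_eq_of_lt (show 1 < n by omega), hym]
    by_cases h2 : y = n <;> simp [h2] <;> omega
  · by_cases h3 : x + 1 = n
    · rw [h3, Nat.mod_self, hym]
      by_cases h2 : y = n <;> simp [h2] <;> omega
    · rw [Nat.mod_eq_of_lt (show x + 1 < n by omega), hym]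
      by_cases h2 : y = n <;> simp [h2] <;> omega

theorem induce_adj {n : ℕ} (hn : 2 ≤ n) {V : Set ℕ} (hV : V ⊆ Set.Icc 1 n) (h1 : (1:ℕ) ∉ V)
    {x y : V} (h : ((cycleGraph n).induce V).Adj x y) : (x:ℕ) = y + 1 ∨ (y:ℕ) = x + 1 := by
  unfold cycleGraph at h
  obtain ⟨hx, hy, hne, hc⟩ := h
  have hx' := hV x.2
  have hy' := hV y.2
  simp only [Set.mem_Icc] at hx' hy'
  simp only [Function.Embedding.coe_subtype] at hc hne
  rcases hc with hc | hc
  · rw [modlem hn hx'.1 hx'.2 hy'.1 hy'.2] at hc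
    rcases hc with hc | ⟨h1', h2'⟩
    · right; omega
    · exact absurd (h2' ▸ y.2) h1
  · rw [modlem hn hy'.1 hy'.2 hx'.1 hx'.2] at hc
    rcases hc with hc | ⟨h1', h2'⟩
    · left; omega
    · exact absurd (h2' ▸ x.2) h1

theorem cg_adj_succ {n : ℕ} (hn : 2 ≤ n) {x : ℕ} (hx : 1 ≤ x) (hx2 : x + 1 ≤ n) :
    (cycleGraph n).Adj x (x+1) := by
  unfold cycleGraph
  refine ⟨⟨hx, by omega⟩, ⟨by omega, by omega⟩, by omega, Or.inl rfl⟩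

theorem reach_ge {n : ℕ} (hn : 2 ≤ n) {V : Set ℕ} (hV : V ⊆ Set.Icc 1 n) (h1 : (1:ℕ) ∉ V)
    {a : ℕ} (ha : a ∈ V) (ha' : a - 1 ∉ V) {b : ℕ} (hb : b ∈ V)
    (hr : ((cycleGraph n).induce V).Reachable ⟨a, ha⟩ ⟨b, hb⟩) : a ≤ b := by
  have key : ∀ (x y : V), ((cycleGraph n).induce V).Walk x y →
      (a ≤ (x:ℕ) ∧ Set.Icc a (x:ℕ) ⊆ V) → (a ≤ (y:ℕ) ∧ Set.Icc a (y:ℕ) ⊆ V) := by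
    intro x y w
    induction w with
    | nil => exact id
    | @cons u v y' hadj w ih =>
      intro hx
      apply ih
      rcases induce_adj hn hV h1 hadj with hc | hc
      · -- hc : u = v + 1, going down
        by_cases hav : a ≤ (v:ℕ)
        · exact ⟨hav, fun z hz => hx.2 ⟨hz.1, by have h2 := hz.2; omega⟩⟩
        · exfalso
          have hva : (v:ℕ) = a - 1 := by
            have := hx.1
            omega
          exact ha' (hva ▸ v.2)
      · -- hc : v = u + 1, going up
        refine ⟨by omega, fun z hz => ?_⟩
        have hz2 := hz.2
        rcases Nat.lt_or_ge z ((u:ℕ)+1) with h | h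
        · exact hx.2 ⟨hz.1, by omega⟩
        · have hzv : z = (v:ℕ) := by omega
          exact hzv ▸ v.2
  obtain ⟨w⟩ := hr
  exact (key _ _ w ⟨le_refl a, fun z hz => by
    have : z = a := by
      simp only [Set.mem_Icc] at hz; omega
    exact this ▸ ha⟩).1

theorem compMins_eq {n : ℕ} (hn : 2 ≤ n) {V : Set ℕ} (hV : V ⊆ Set.Icc 1 n) (h1 : (1:ℕ) ∉ V) :
    compMins n V = {a | a ∈ V ∧ a - 1 ∉ V} := by
  ext a
  constructor
  · rintro ⟨ha, hmin⟩
    refine ⟨ha, fun hm => ?_⟩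
    have ha2 : 2 ≤ a := by
      have := hV ha
      simp only [Set.mem_Icc] at this
      rcases Nat.lt_or_ge a 2 with h | h
      · interval_cases a
        · exact absurd ha (by intro hh; have := hV hh; simp at this)
        · exact absurd ha h1
      · exact h
    have hadj : ((cycleGraph n).induce V).Adj ⟨a, ha⟩ ⟨a-1, hm⟩ := by
      simp only [SimpleGraph.comap_adj, Function.Embedding.coe_subtype]
      unfold cycleGraph
      exact ⟨hV ha, hV hm, by omega, Or.inr (by rw [show a - 1 + 1 = a by omega])⟩
    have := hmin (a-1) hm hadj.reachable
    omega
  · rintro ⟨ha, ha'⟩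
    exact ⟨ha, fun b hb hr => reach_ge hn hV h1 ha ha' hb hr⟩

section NthHelpers
variable {S : Set ℕ} {k : ℕ}

theorem nth_card (hS : S.Finite) (hk : S.ncard = k) :
    hS.toFinset.card = k := by
  rw [← hk, Set.ncard_eq_toFinset_card S hS]

theorem nth_mem' (hS : S.Finite) (hk : S.ncard = k) {i : ℕ} (hi : i < k) :
    Nat.nth (· ∈ S) i ∈ S :=
  Nat.nth_mem_of_lt_card hS (by rwa [nth_card hS hk])

theorem nth_mono' (hS : S.Finite) (hk : S.ncard = k) {i i' : ℕ} (h : i < i') (hi : i' < k) :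
    Nat.nth (· ∈ S) i < Nat.nth (· ∈ S) i' :=
  Nat.nth_lt_nth_of_lt_card hS h (by rwa [nth_card hS hk])

theorem nth_surj (hS : S.Finite) (hk : S.ncard = k) {a : ℕ} (ha : a ∈ S) :
    ∃ i, i < k ∧ Nat.nth (· ∈ S) i = a := by
  obtain ⟨i, hi, he⟩ := Nat.exists_lt_card_finite_nth_eq hS (show (· ∈ S) a from ha)
  exact ⟨i, by rwa [nth_card hS hk] at hi, he⟩

theorem nth_zero' : Nat.nth (· ∈ S) 0 = sInf S := Nat.nth_zero

theorem nth_unique (hS : S.Finite) (hk : S.ncard = k) {f : ℕ → ℕ}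
    (hmem : ∀ i, i < k → f i ∈ S) (hmono : ∀ i₁ i₂, i₁ < i₂ → i₂ < k → f i₁ < f i₂)
    {i : ℕ} (hi : i < k) : f i = Nat.nth (· ∈ S) i := by
  have hf : (setOf (· ∈ S)).Finite := hS
  have hkc : hf.toFinset.card = k := nth_card hS hk
  have e1 := Finset.orderEmbOfFin_unique hkc (f := fun i : Fin k => f i)
    (fun x => hf.mem_toFinset.2 (hmem x x.2))
    (fun x y hxy => hmono x y hxy y.2)
  have e2 := Finset.orderEmbOfFin_unique hkc (f := fun i : Fin k => Nat.nth (· ∈ S) i)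
    (fun x => hf.mem_toFinset.2 (Nat.nth_mem_of_lt_card hf (hkc ▸ x.2)))
    (fun x y hxy => Nat.nth_lt_nth_of_lt_card hf hxy (hkc ▸ y.2))
  have := (congrFun e1 ⟨i, hi⟩).trans (congrFun e2 ⟨i, hi⟩).symm
  exact this

theorem nth_image (hS : S.Finite) (hk : S.ncard = k) :
    Nat.nth (· ∈ S) '' Set.Iio k = S := by
  have hf : (setOf (· ∈ S)).Finite := hS
  have := Nat.image_nth_Iio_card hf
  rwa [nth_card hS hk] at this

end NthHelpers

theorem ncard_Icc (n : ℕ) : (Set.Icc 1 n).ncard = n := by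
  rw [← Finset.coe_Icc, Set.ncard_coe_finset, Nat.card_Icc]; omega

example (n : ℕ) : (Set.Icc 1 n).Finite := Set.finite_Icc 1 n


section GHsec

/-- master filling -/
noncomputable def gfun (n j : ℕ) (R Cf : Set ℕ) (a : ℕ) : ℕ × ℕ → ℕ := fun p =>
  if p.1 = 0 ∧ p.2 < j then Nat.nth (· ∈ R) p.2
  else if p = (1,1) then a
  else if p.2 = 0 ∧ 1 ≤ p.1 ∧ p.1 < n - j then Nat.nth (· ∈ Cf) p.1
  else 0

/-- hypotheses bundle for the data (R, Cf, a) of an SYT -/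
structure GH (n j : ℕ) (R Cf : Set ℕ) (a : ℕ) : Prop where
  h1R : 1 ∈ R
  h1C : 1 ∈ Cf
  hRC : R ∩ Cf = {1}
  hcov : R ∪ Cf ∪ {a} = Set.Icc 1 n
  haR : a ∉ R
  haC : a ∉ Cf
  hRc : R.ncard = j
  hCc : Cf.ncard = n - j
  hr2 : Nat.nth (· ∈ R) 1 < a
  hc2 : Nat.nth (· ∈ Cf) 1 < a

variable {n j : ℕ} {R Cf : Set ℕ} {a : ℕ}

namespace GH

theorem hRI (h : GH n j R Cf a) : R ⊆ Set.Icc 1 n := by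
  rw [← h.hcov]; intro x hx; exact Or.inl (Or.inl hx)

theorem hCI (h : GH n j R Cf a) : Cf ⊆ Set.Icc 1 n := by
  rw [← h.hcov]; intro x hx; exact Or.inl (Or.inr hx)

theorem haI (h : GH n j R Cf a) : a ∈ Set.Icc 1 n := by
  rw [← h.hcov]; exact Or.inr rfl

theorem hRF (h : GH n j R Cf a) : R.Finite := (Set.finite_Icc 1 n).subset h.hRI
theorem hCF (h : GH n j R Cf a) : Cf.Finite := (Set.finite_Icc 1 n).subset h.hCI

theorem sInfR (h : GH n j R Cf a) : sInf R = 1 := by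
  have h1 := Nat.sInf_le h.h1R
  have h2 : sInf R ∈ R := Nat.sInf_mem ⟨1, h.h1R⟩
  have := (h.hRI h2).1
  omega

theorem sInfC (h : GH n j R Cf a) : sInf Cf = 1 := by
  have h1 := Nat.sInf_le h.h1C
  have h2 : sInf Cf ∈ Cf := Nat.sInf_mem ⟨1, h.h1C⟩
  have := (h.hCI h2).1
  omega

theorem nthR0 (h : GH n j R Cf a) : Nat.nth (· ∈ R) 0 = 1 := by
  rw [nth_zero', h.sInfR]

theorem nthC0 (h : GH n j R Cf a) : Nat.nth (· ∈ Cf) 0 = 1 := by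
  rw [nth_zero', h.sInfC]

theorem ha3 (h : GH n j R Cf a) (hj1 : 2 ≤ j) : 3 ≤ a := by
  have h1 := h.hr2
  have h0 : Nat.nth (· ∈ R) 0 < Nat.nth (· ∈ R) 1 :=
    nth_mono' h.hRF h.hRc (by omega) (by omega)
  rw [h.nthR0] at h0
  omega

end GH

end GHsec

theorem nth_inj' {S : Set ℕ} {k : ℕ} (hS : S.Finite) (hk : S.ncard = k) {i i' : ℕ}
    (hi : i < k) (hi' : i' < k) (he : Nat.nth (· ∈ S) i = Nat.nth (· ∈ S) i') : i = i' := by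
  rcases lt_trichotomy i i' with h | h | h
  · exact absurd he (nth_mono' hS hk h hi').ne
  · exact h
  · exact absurd he.symm (nth_mono' hS hk h hi).ne

theorem nth_one_le {S : Set ℕ} {k : ℕ} (hS : S.Finite) (hk : S.ncard = k) {x : ℕ}
    (hx : x ∈ S) (hne : x ≠ sInf S) : Nat.nth (· ∈ S) 1 ≤ x := by
  obtain ⟨i, hi, he⟩ := nth_surj hS hk hx
  have hi0 : i ≠ 0 := by
    rintro rfl
    rw [nth_zero'] at he
    exact hne he.symm
  rcases eq_or_lt_of_le (show 1 ≤ i by omega) with h | h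
  · exact le_of_eq (h ▸ he)
  · exact ((nth_mono' hS hk h hi).trans_eq he).le

theorem nth_image_tail {S : Set ℕ} {k : ℕ} (hS : S.Finite) (hk : S.ncard = k) :
    Nat.nth (· ∈ S) '' {c | 1 ≤ c ∧ c < k} = S \ {sInf S} := by
  ext x
  constructor
  · rintro ⟨c, ⟨hc1, hc2⟩, rfl⟩
    refine ⟨nth_mem' hS hk hc2, ?_⟩
    simp only [Set.mem_singleton_iff]
    rw [← nth_zero']
    intro he
    have := nth_inj' hS hk hc2 (by omega) he
    omega
  · rintro ⟨hx, hx2⟩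
    simp only [Set.mem_singleton_iff] at hx2
    obtain ⟨i, hi, he⟩ := nth_surj hS hk hx
    have hi0 : i ≠ 0 := by
      rintro rfl
      rw [nth_zero'] at he
      exact hx2 he.symm
    exact ⟨i, ⟨by omega, hi⟩, he⟩

theorem sInf_diff_singleton {S : Set ℕ} {a : ℕ} (hne : sInf S ≠ a) (hS : S.Nonempty) :
    sInf (S \ {a}) = sInf S := by
  have h1 : sInf S ∈ S \ {a} := ⟨Nat.sInf_mem hS, hne⟩
  have h2 := Nat.sInf_le h1
  have h3 : sInf (S \ {a}) ∈ S \ {a} := Nat.sInf_mem ⟨_, h1⟩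
  have h4 := Nat.sInf_le h3.1
  omega

theorem mem_insert_one {C : Set ℕ} {x : ℕ} : x ∈ ({1} ∪ C : Set ℕ) ↔ x = 1 ∨ x ∈ C := by
  simp [Set.mem_union]

theorem ncard_insert_one {C : Set ℕ} (hC : C.Finite) (hC2 : ∀ x ∈ C, 2 ≤ x) :
    ({1} ∪ C : Set ℕ).ncard = C.ncard + 1 := by
  rw [Set.singleton_union, Set.ncard_insert_of_notMem (fun h => by have := hC2 1 h; omega) hC]

theorem nth_insert_zero {C : Set ℕ} (hC2 : ∀ x ∈ C, 2 ≤ x) :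
    Nat.nth (· ∈ ({1} ∪ C : Set ℕ)) 0 = 1 := by
  rw [nth_zero']
  have h1 : (1:ℕ) ∈ ({1} ∪ C : Set ℕ) := Or.inl rfl
  have h2 := Nat.sInf_le h1
  have h3 : sInf ({1} ∪ C : Set ℕ) ∈ ({1} ∪ C : Set ℕ) := Nat.sInf_mem ⟨1, h1⟩
  rcases h3 with h3 | h3
  · exact h3
  · have := hC2 _ h3; omega

theorem nth_insert_succ {C : Set ℕ} (hC : C.Finite) {k : ℕ} (hk : C.ncard = k)
    (hC2 : ∀ x ∈ C, 2 ≤ x) {i : ℕ} (hi : i < k) :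
    Nat.nth (· ∈ ({1} ∪ C : Set ℕ)) (i+1) = Nat.nth (· ∈ C) i := by
  have hS : ({1} ∪ C : Set ℕ).Finite := (Set.finite_singleton 1).union hC
  have hkc : ({1} ∪ C : Set ℕ).ncard = k + 1 := by rw [ncard_insert_one hC hC2, hk]
  have := nth_unique hS hkc (f := fun m => if m = 0 then 1 else Nat.nth (· ∈ C) (m-1))
    (fun i hi => by
      by_cases h : i = 0
      · simp [h]
      · simp only [if_neg h]
        exact Or.inr (nth_mem' hC hk (by omega)))
    (fun i₁ i₂ hlt hi₂ => by
      by_cases h : i₁ = 0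
      · rw [if_pos h, if_neg (show ¬ i₂ = 0 by omega)]
        have := hC2 _ (nth_mem' hC hk (show i₂ - 1 < k by omega))
        omega
      · rw [if_neg h, if_neg (show ¬ i₂ = 0 by omega)]
        exact nth_mono' hC hk (by omega) (by omega))
    (show i + 1 < k + 1 by omega)
  simpa using this.symm

section CellLemmas
variable {n j : ℕ}

theorem cell_cases (hnj : 2 ≤ n - j) {p : ℕ × ℕ} (h : cell n j p) :
    (p.1 = 0 ∧ p.2 < j) ∨ p = (1,1) ∨ (p.2 = 0 ∧ 1 ≤ p.1 ∧ p.1 < n - j) := by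
  obtain ⟨p1, p2⟩ := p
  rcases h with ⟨h1, h2⟩ | ⟨h1, h2⟩ | ⟨h1, h2, h3⟩
  · exact Or.inl ⟨h1, h2⟩
  · simp only at h1 h2
    subst h1
    rcases (by omega : p2 = 0 ∨ p2 = 1) with h | h
    · exact Or.inr (Or.inr ⟨h, by omega, by omega⟩)
    · exact Or.inr (Or.inl (by rw [h]))
  · exact Or.inr (Or.inr ⟨h3, by omega, h2⟩)

theorem cell_of_row {p : ℕ × ℕ} (h1 : p.1 = 0) (h2 : p.2 < j) : cell n j p := Or.inl ⟨h1, h2⟩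

theorem cell_mid : cell n j (1,1) := Or.inr (Or.inl ⟨rfl, by omega⟩)

theorem cell_of_col (hnj : 2 ≤ n - j) {p : ℕ × ℕ} (h1 : p.2 = 0) (h2 : 1 ≤ p.1)
    (h3 : p.1 < n - j) : cell n j p := by
  obtain ⟨p1, p2⟩ := p
  simp only at h1 h2 h3
  subst h1
  rcases (by omega : p1 = 1 ∨ 2 ≤ p1) with h | h
  · exact Or.inr (Or.inl ⟨h, by omega⟩)
  · exact Or.inr (Or.inr ⟨h, h3, rfl⟩)

end CellLemmas

section GfunLemmas
variable {n j : ℕ} {R Cf : Set ℕ} {a : ℕ}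

theorem gfun_row {p : ℕ × ℕ} (h1 : p.1 = 0) (h2 : p.2 < j) :
    gfun n j R Cf a p = Nat.nth (· ∈ R) p.2 := if_pos ⟨h1, h2⟩

theorem gfun_mid : gfun n j R Cf a (1,1) = a := by
  simp [gfun]

theorem gfun_col (h : GH n j R Cf a) (hj1 : 1 ≤ j) {p : ℕ × ℕ} (h1 : p.2 = 0)
    (h2 : p.1 < n - j) : gfun n j R Cf a p = Nat.nth (· ∈ Cf) p.1 := by
  by_cases h0 : p.1 = 0
  · rw [gfun_row h0 (by omega), h1, h0, h.nthR0, h.nthC0]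
  · unfold gfun
    rw [if_neg (by simp [h0]), if_neg (by
      intro hh
      rw [hh] at h1
      simp at h1), if_pos ⟨h1, by omega, h2⟩]

theorem gfun_zero (hnj : 2 ≤ n - j) {p : ℕ × ℕ} (h : ¬ cell n j p) :
    gfun n j R Cf a p = 0 := by
  unfold gfun
  rw [if_neg, if_neg, if_neg]
  · intro ⟨h1, h2, h3⟩
    exact h (cell_of_col hnj h1 h2 h3)
  · intro hh
    exact h (hh ▸ cell_mid)
  · intro ⟨h1, h2⟩
    exact h (cell_of_row h1 h2)

end GfunLemmas

section Master
variable {n j : ℕ} {R Cf : Set ℕ} {a : ℕ}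

theorem GH.isSYT (h : GH n j R Cf a) (hn : 4 ≤ n) (hj1 : 2 ≤ j) (hj2 : j ≤ n - 2) :
    IsSYT n j (gfun n j R Cf a) := by
  have hnj : 2 ≤ n - j := by omega
  have hRF := h.hRF
  have hCF := h.hCF
  have hRc := h.hRc
  have hCc := h.hCc
  refine ⟨fun p hp => gfun_zero hnj hp, ⟨?_, ?_, ?_⟩, ?_, ?_⟩
  · -- MapsTo
    intro p hp
    rcases cell_cases hnj hp with ⟨h1, h2⟩ | rfl | ⟨h1, h2, h3⟩
    · rw [gfun_row h1 h2]
      exact h.hRI (nth_mem' hRF hRc h2)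
    · rw [gfun_mid]
      exact h.haI
    · rw [gfun_col h (by omega) h1 h3]
      exact h.hCI (nth_mem' hCF hCc h3)
  · -- InjOn
    intro p hp q hq he
    rcases cell_cases hnj hp with ⟨p1, p2⟩ | rfl | ⟨p1, p2, p3⟩ <;>
      rcases cell_cases hnj hq with ⟨q1, q2⟩ | rfl | ⟨q1, q2, q3⟩
    · rw [gfun_row p1 p2, gfun_row q1 q2] at he
      exact Prod.ext (p1.trans q1.symm) (nth_inj' hRF hRc p2 q2 he)
    · rw [gfun_row p1 p2, gfun_mid] at he
      exact absurd (he ▸ nth_mem' hRF hRc p2) h.haR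
    · rw [gfun_row p1 p2, gfun_col h (by omega) q1 q3] at he
      have hx : Nat.nth (· ∈ R) p.2 ∈ R ∩ Cf :=
        ⟨nth_mem' hRF hRc p2, he ▸ nth_mem' hCF hCc q3⟩
      rw [h.hRC] at hx
      have h0 : Nat.nth (· ∈ Cf) q.1 = Nat.nth (· ∈ Cf) 0 := by
        rw [h.nthC0, ← he, hx]
      have := nth_inj' hCF hCc q3 (by omega) h0
      omega
    · rw [gfun_row q1 q2, gfun_mid] at he
      exact absurd (he ▸ nth_mem' hRF hRc q2) h.haR
    · rfl
    · rw [gfun_mid, gfun_col h (by omega) q1 q3] at he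
      exact absurd (he ▸ nth_mem' hCF hCc q3) h.haC
    · rw [gfun_row q1 q2, gfun_col h (by omega) p1 p3] at he
      have hx : Nat.nth (· ∈ R) q.2 ∈ R ∩ Cf :=
        ⟨nth_mem' hRF hRc q2, he ▸ nth_mem' hCF hCc p3⟩
      rw [h.hRC] at hx
      have h0 : Nat.nth (· ∈ Cf) p.1 = Nat.nth (· ∈ Cf) 0 := by
        rw [h.nthC0, he, hx]
      have := nth_inj' hCF hCc p3 (by omega) h0
      omega
    · rw [gfun_mid, gfun_col h (by omega) p1 p3] at he
      exact absurd (he ▸ nth_mem' hCF hCc p3) h.haC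
    · rw [gfun_col h (by omega) p1 p3, gfun_col h (by omega) q1 q3] at he
      exact Prod.ext (nth_inj' hCF hCc p3 q3 he) (p1.trans q1.symm)
  · -- SurjOn
    intro x hx
    rw [← h.hcov] at hx
    by_cases hxR : x ∈ R
    · obtain ⟨i, hi, he⟩ := nth_surj hRF hRc hxR
      exact ⟨(0, i), cell_of_row rfl hi, by rw [gfun_row rfl hi]; exact he⟩
    · rcases hx with (hx | hx) | hx
      · exact absurd hx hxR
      · obtain ⟨i, hi, he⟩ := nth_surj hCF hCc hx
        have hi0 : i ≠ 0 := by
          rintro rfl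
          rw [h.nthC0] at he
          exact hxR (he ▸ h.h1R)
        refine ⟨(i, 0), cell_of_col hnj rfl (by omega) hi, ?_⟩
        rw [gfun_col h (by omega) rfl hi]
        exact he
      · exact ⟨(1, 1), cell_mid, by rw [Set.mem_singleton_iff] at hx; rw [gfun_mid, hx]⟩
  · -- rows
    intro p q hp hq he hlt
    rcases cell_cases hnj hp with ⟨p1, p2⟩ | rfl | ⟨p1, p2, p3⟩ <;>
      rcases cell_cases hnj hq with ⟨q1, q2⟩ | rfl | ⟨q1, q2, q3⟩
    · rw [gfun_row p1 p2, gfun_row q1 q2]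
      exact nth_mono' hRF hRc hlt q2
    · omega
    · omega
    · omega
    · omega
    · omega
    · omega
    · -- p col, q = (1,1): p = (1,0)
      have hp1 : p = (1, 0) := Prod.ext (by omega) p1
      rw [gfun_mid, gfun_col h (by omega) p1 p3, hp1]
      exact h.hc2
    · omega
  · -- cols
    intro p q hp hq he hlt
    rcases cell_cases hnj hp with ⟨p1, p2⟩ | rfl | ⟨p1, p2, p3⟩ <;>
      rcases cell_cases hnj hq with ⟨q1, q2⟩ | rfl | ⟨q1, q2, q3⟩
    · omega
    · -- p row, q = (1,1): p = (0,1)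
      have hp1 : p = (0, 1) := Prod.ext p1 (by omega)
      rw [gfun_mid, gfun_row p1 p2, hp1]
      exact h.hr2
    · -- p row, q col: p = (0,0)
      rw [gfun_row p1 p2, gfun_col h (by omega) q1 q3]
      have hp2 : p.2 = 0 := by omega
      rw [hp2, h.nthR0, ← h.nthC0]
      exact nth_mono' hCF hCc (by omega) q3
    · omega
    · omega
    · omega
    · omega
    · omega
    · rw [gfun_col h (by omega) p1 p3, gfun_col h (by omega) q1 q3]
      exact nth_mono' hCF hCc hlt q3
end Master

section DataLemmas
variable {n j : ℕ} {R Cf : Set ℕ} {a : ℕ}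

theorem gfun_image_row (h : GH n j R Cf a) :
    gfun n j R Cf a '' {p : ℕ × ℕ | p.1 = 0 ∧ p.2 < j} = R := by
  ext x
  constructor
  · rintro ⟨p, ⟨h1, h2⟩, rfl⟩
    rw [gfun_row h1 h2]
    exact nth_mem' h.hRF h.hRc h2
  · intro hx
    obtain ⟨i, hi, he⟩ := nth_surj h.hRF h.hRc hx
    exact ⟨(0, i), ⟨rfl, hi⟩, by rw [gfun_row rfl hi]; exact he⟩

theorem gfun_image_row_tail (h : GH n j R Cf a) :
    gfun n j R Cf a '' {p : ℕ × ℕ | p.1 = 0 ∧ 1 ≤ p.2 ∧ p.2 < j} = R \ {1} := by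
  have := nth_image_tail h.hRF h.hRc
  rw [h.sInfR] at this
  rw [← this]
  ext x
  constructor
  · rintro ⟨p, ⟨h1, h2, h3⟩, rfl⟩
    exact ⟨p.2, ⟨h2, h3⟩, (gfun_row h1 h3).symm⟩
  · rintro ⟨c, ⟨h2, h3⟩, rfl⟩
    exact ⟨(0, c), ⟨rfl, h2, h3⟩, gfun_row rfl h3⟩

theorem gfun_aT : aT (gfun n j R Cf a) = a := gfun_mid

theorem gfun_WT_of_mem (h : GH n j R Cf a) (hj1 : 2 ≤ j) (hmem : a - 1 ∈ R) :
    WT j (gfun n j R Cf a) = R := by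
  rw [WT, if_pos, gfun_image_row h]
  obtain ⟨i, hi, he⟩ := nth_surj h.hRF h.hRc hmem
  refine ⟨i, hi, ?_⟩
  rw [gfun_row rfl hi, gfun_mid]
  exact he

theorem gfun_WT_of_not_mem (h : GH n j R Cf a) (hj1 : 2 ≤ j) (hmem : a - 1 ∉ R) :
    WT j (gfun n j R Cf a) = {a} ∪ (R \ {1}) := by
  rw [WT, if_neg, gfun_image_row_tail h, gfun_mid]
  rintro ⟨c, hc, he⟩
  rw [gfun_row rfl hc, gfun_mid] at he
  exact hmem (he ▸ nth_mem' h.hRF h.hRc hc)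

theorem mSet_eq_of_mem (hn : 2 ≤ n) {W : Set ℕ} (h1 : 1 ∈ W) :
    mSet n W = {x | x ∈ Set.Icc 1 n \ W ∧ x - 1 ∉ Set.Icc 1 n \ W} := by
  rw [mSet, if_pos h1, compMins_eq hn Set.diff_subset (fun hh => hh.2 h1)]

theorem mSet_eq_of_not_mem (hn : 2 ≤ n) {W : Set ℕ} (hW : W ⊆ Set.Icc 1 n) (h1 : 1 ∉ W) :
    mSet n W = {x | x ∈ W ∧ x - 1 ∉ W} := by
  rw [mSet, if_neg h1, compMins_eq hn hW h1]

theorem sInf_D {n : ℕ} {V : Set ℕ} (hV : V ⊆ Set.Icc 1 n) (hne : V.Nonempty) :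
    sInf {x | x ∈ V ∧ x - 1 ∉ V} = sInf V := by
  have h1 : sInf V ∈ V := Nat.sInf_mem hne
  have hge : 1 ≤ sInf V := (hV h1).1
  have h2 : sInf V - 1 ∉ V := fun hh => by have := Nat.sInf_le hh; omega
  have h3 : sInf V ∈ {x | x ∈ V ∧ x - 1 ∉ V} := ⟨h1, h2⟩
  have h4 : sInf {x | x ∈ V ∧ x - 1 ∉ V} ∈ {x | x ∈ V ∧ x - 1 ∉ V} := Nat.sInf_mem ⟨_, h3⟩
  have h5 := Nat.sInf_le h3
  have h6 := Nat.sInf_le h4.1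
  omega

end DataLemmas

section CaseLemmas
variable {n j : ℕ}

theorem case1_GH (hn : 4 ≤ n) (hj1 : 2 ≤ j) (hj2 : j ≤ n - 2) {W : Set ℕ} {a : ℕ}
    (hWI : W ⊆ Set.Icc 1 n) (hWc : W.ncard = j) (h1W : 1 ∈ W)
    (haV : a ∈ Set.Icc 1 n \ W) (ham : a - 1 ∉ Set.Icc 1 n \ W)
    (hane : a ≠ sInf (Set.Icc 1 n \ W)) :
    GH n j W ({1} ∪ ((Set.Icc 1 n \ W) \ {a})) a ∧
      fillRow n j W a = gfun n j W ({1} ∪ ((Set.Icc 1 n \ W) \ {a})) a ∧ a - 1 ∈ W := by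
  set V := Set.Icc 1 n \ W with hVdef
  have hIccF : (Set.Icc 1 n).Finite := Set.finite_Icc 1 n
  have hWF : W.Finite := hIccF.subset hWI
  have hVF : V.Finite := hIccF.subset Set.diff_subset
  have hVc : V.ncard = n - j := by
    rw [hVdef, Set.ncard_diff hWI hWF, ncard_Icc, hWc]
  have h1V : (1:ℕ) ∉ V := fun hh => hh.2 h1W
  have ha2 : 2 ≤ a := by
    have h1 := haV.1.1
    have : a ≠ 1 := fun hh => h1V (hh ▸ haV)
    omega
  have hsV2 : 2 ≤ sInf V := by
    have h1 : sInf V ∈ V := Nat.sInf_mem ⟨a, haV⟩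
    have h2 := h1.1.1
    have : sInf V ≠ 1 := fun hh => h1V (hh ▸ h1)
    omega
  have hsVa : sInf V < a := by
    have := Nat.sInf_le haV
    omega
  have ha3 : 3 ≤ a := by omega
  have hamW : a - 1 ∈ W := by
    by_contra hc
    have han := haV.1.2
    exact ham ⟨⟨by omega, by omega⟩, hc⟩
  have hC2 : ∀ x ∈ V \ {a}, 2 ≤ x := by
    intro x hx
    have h1 := hx.1.1.1
    have : x ≠ 1 := fun hh => h1V (hh ▸ hx.1)
    omega
  have hVac : (V \ {a}).ncard = n - j - 1 := by
    rw [Set.ncard_diff (Set.singleton_subset_iff.2 haV) (Set.finite_singleton a),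
      Set.ncard_singleton, hVc]
  have hCc : ({1} ∪ (V \ {a}) : Set ℕ).ncard = n - j := by
    rw [ncard_insert_one (hVF.diff) hC2, hVac]
    omega
  have hsW : sInf W = 1 := by
    have h1 := Nat.sInf_le h1W
    have h2 : sInf W ∈ W := Nat.sInf_mem ⟨1, h1W⟩
    have := (hWI h2).1
    omega
  have hGH : GH n j W ({1} ∪ (V \ {a})) a := by
    refine ⟨h1W, Or.inl rfl, ?_, ?_, fun hh => haV.2 hh, ?_, hWc, hCc, ?_, ?_⟩
    · ext x
      constructor
      · rintro ⟨hxW, hx1 | hxV⟩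
        · exact hx1
        · exact absurd hxW hxV.1.2
      · rintro rfl
        exact ⟨h1W, Or.inl rfl⟩
    · ext x
      constructor
      · rintro ((hx | (hx | hx)) | hx)
        · exact hWI hx
        · simp only [Set.mem_singleton_iff] at hx
          subst hx
          exact ⟨by omega, by omega⟩
        · exact hx.1.1
        · simp only [Set.mem_singleton_iff] at hx
          subst hx
          exact haV.1
      · intro hx
        by_cases hxW : x ∈ W
        · exact Or.inl (Or.inl hxW)
        · by_cases hxa : x = a
          · exact Or.inr hxa
          · exact Or.inl (Or.inr (Or.inr ⟨⟨hx, hxW⟩, hxa⟩))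
    · rintro ((hh : a = 1) | hh)
      · omega
      · exact hh.2 rfl
    · have h1 : Nat.nth (· ∈ W) 1 ≤ a - 1 := by
        apply nth_one_le hWF hWc hamW
        rw [hsW]
        omega
      omega
    · have h1 : Nat.nth (· ∈ ({1} ∪ (V \ {a}) : Set ℕ)) 1 = Nat.nth (· ∈ (V \ {a})) 0 :=
        nth_insert_succ (hVF.diff) hVac hC2 (by omega)
      rw [h1, nth_zero', sInf_diff_singleton (by omega) ⟨a, haV⟩]
      omega
  refine ⟨hGH, ?_, hamW⟩
  funext p
  unfold fillRow gfun
  simp only [← hVdef]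
  by_cases hb1 : p.1 = 0 ∧ p.2 < j
  · rw [if_pos hb1, if_pos hb1]
  · rw [if_neg hb1, if_neg hb1]
    by_cases hb2 : p = (1,1)
    · rw [if_pos hb2, if_pos hb2]
    · rw [if_neg hb2, if_neg hb2]
      by_cases hb3 : p.2 = 0 ∧ 1 ≤ p.1 ∧ p.1 < n - j
      · rw [if_pos hb3, if_pos hb3]
        have hs : Nat.nth (· ∈ ({1} ∪ (V \ {a}) : Set ℕ)) (p.1 - 1 + 1) =
            Nat.nth (· ∈ (V \ {a})) (p.1 - 1) :=
          nth_insert_succ (hVF.diff) hVac hC2 (by omega)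
        rw [show p.1 - 1 + 1 = p.1 by omega] at hs
        rw [← hs]
      · rw [if_neg hb3, if_neg hb3]

theorem case2_GH (hn : 4 ≤ n) (hj1 : 2 ≤ j) (hj2 : j ≤ n - 2) {W : Set ℕ} {a : ℕ}
    (hWI : W ⊆ Set.Icc 1 n) (hWc : W.ncard = j) (h1W : 1 ∉ W)
    (haW : a ∈ W) (ham : a - 1 ∉ W) (hane : a ≠ sInf W) :
    GH n j ({1} ∪ (W \ {a})) (Set.Icc 1 n \ W) a ∧
      fillCol n j W a = gfun n j ({1} ∪ (W \ {a})) (Set.Icc 1 n \ W) a ∧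
      a - 1 ∉ ({1} ∪ (W \ {a}) : Set ℕ) := by
  set Cf := Set.Icc 1 n \ W with hCdef
  have hIccF : (Set.Icc 1 n).Finite := Set.finite_Icc 1 n
  have hWF : W.Finite := hIccF.subset hWI
  have hCF : Cf.Finite := hIccF.subset Set.diff_subset
  have hCc : Cf.ncard = n - j := by
    rw [hCdef, Set.ncard_diff hWI hWF, ncard_Icc, hWc]
  have ha2 : 2 ≤ a := by
    have h1 := (hWI haW).1
    have : a ≠ 1 := fun hh => h1W (hh ▸ haW)
    omega
  have hsW2 : 2 ≤ sInf W := by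
    have h1 : sInf W ∈ W := Nat.sInf_mem ⟨a, haW⟩
    have h2 := (hWI h1).1
    have : sInf W ≠ 1 := fun hh => h1W (hh ▸ h1)
    omega
  have hsWa : sInf W < a := by
    have := Nat.sInf_le haW
    omega
  have ha3 : 3 ≤ a := by omega
  have hamC : a - 1 ∈ Cf := by
    have := (hWI haW).2
    exact ⟨⟨by omega, by omega⟩, ham⟩
  have hR2 : ∀ x ∈ W \ {a}, 2 ≤ x := by
    intro x hx
    have h1 := (hWI hx.1).1
    have : x ≠ 1 := fun hh => h1W (hh ▸ hx.1)
    omega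
  have hWac : (W \ {a}).ncard = j - 1 := by
    rw [Set.ncard_diff (Set.singleton_subset_iff.2 haW) (Set.finite_singleton a),
      Set.ncard_singleton, hWc]
  have hRc : ({1} ∪ (W \ {a}) : Set ℕ).ncard = j := by
    rw [ncard_insert_one (hWF.diff) hR2, hWac]
    omega
  have h1C : (1:ℕ) ∈ Cf := ⟨⟨le_refl 1, by omega⟩, h1W⟩
  have hsC : sInf Cf = 1 := by
    have h1 := Nat.sInf_le h1C
    have h2 : sInf Cf ∈ Cf := Nat.sInf_mem ⟨1, h1C⟩
    have := h2.1.1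
    omega
  have hGH : GH n j ({1} ∪ (W \ {a})) Cf a := by
    refine ⟨Or.inl rfl, h1C, ?_, ?_, ?_, fun hh => hh.2 haW, hRc, hCc, ?_, ?_⟩
    · ext x
      constructor
      · rintro ⟨hx1 | hxW, hxC⟩
        · exact hx1
        · exact absurd hxW.1 hxC.2
      · rintro rfl
        exact ⟨Or.inl rfl, h1C⟩
    · ext x
      constructor
      · rintro ((hx | hx) | hx)
        · rcases hx with hx | hx
          · simp only [Set.mem_singleton_iff] at hx
            subst hx
            exact ⟨by omega, by omega⟩
          · exact hWI hx.1
        · exact hx.1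
        · simp only [Set.mem_singleton_iff] at hx
          subst hx
          exact hWI haW
      · intro hx
        by_cases hxW : x ∈ W
        · by_cases hxa : x = a
          · exact Or.inr hxa
          · exact Or.inl (Or.inl (Or.inr ⟨hxW, hxa⟩))
        · exact Or.inl (Or.inr ⟨hx, hxW⟩)
    · rintro ((hh : a = 1) | hh)
      · omega
      · exact hh.2 rfl
    · have h1 : Nat.nth (· ∈ ({1} ∪ (W \ {a}) : Set ℕ)) 1 = Nat.nth (· ∈ (W \ {a})) 0 :=
        nth_insert_succ (hWF.diff) hWac hR2 (by omega)
      rw [h1, nth_zero', sInf_diff_singleton (by omega) ⟨a, haW⟩]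
      omega
    · have h1 : Nat.nth (· ∈ Cf) 1 ≤ a - 1 := by
        apply nth_one_le hCF hCc hamC
        rw [hsC]
        omega
      omega
  have hnma : a - 1 ∉ ({1} ∪ (W \ {a}) : Set ℕ) := by
    rintro ((hh : a - 1 = 1) | hh)
    · omega
    · exact ham hh.1
  refine ⟨hGH, ?_, hnma⟩
  funext p
  obtain ⟨p1, p2⟩ := p
  unfold fillCol gfun
  simp only [← hCdef]
  by_cases h1 : p1 = 0
  · by_cases h2 : p2 = 0
    · rw [if_pos (show (p1, p2).2 = 0 ∧ (p1, p2).1 < n - j from ⟨h2, by omega⟩),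
        if_pos (show (p1, p2).1 = 0 ∧ (p1, p2).2 < j from ⟨h1, by omega⟩)]
      simp only [h1, h2]
      rw [nth_insert_zero hR2, nth_zero', hsC]
    · by_cases h3 : p2 < j
      · rw [if_neg (show ¬((p1, p2).2 = 0 ∧ (p1, p2).1 < n - j) from fun hh => h2 hh.1),
          if_neg (show (p1, p2) ≠ (1, 1) by simp [Prod.ext_iff]; omega),
          if_pos (show (p1, p2).1 = 0 ∧ 1 ≤ (p1, p2).2 ∧ (p1, p2).2 < j from ⟨h1, by omega, h3⟩),
          if_pos (show (p1, p2).1 = 0 ∧ (p1, p2).2 < j from ⟨h1, h3⟩)]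
        have hs : Nat.nth (· ∈ ({1} ∪ (W \ {a}) : Set ℕ)) (p2 - 1 + 1) =
            Nat.nth (· ∈ (W \ {a})) (p2 - 1) :=
          nth_insert_succ (hWF.diff) hWac hR2 (by omega)
        rw [show p2 - 1 + 1 = p2 by omega] at hs
        rw [hs]
      · rw [if_neg (show ¬((p1, p2).2 = 0 ∧ (p1, p2).1 < n - j) from fun hh => h2 hh.1),
          if_neg (show (p1, p2) ≠ (1, 1) by simp [Prod.ext_iff]; omega),
          if_neg (show ¬((p1, p2).1 = 0 ∧ 1 ≤ (p1, p2).2 ∧ (p1, p2).2 < j) from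
            fun hh => h3 hh.2.2),
          if_neg (show ¬((p1, p2).1 = 0 ∧ (p1, p2).2 < j) from fun hh => h3 hh.2),
          if_neg (show (p1, p2) ≠ (1, 1) by simp [Prod.ext_iff]; omega),
          if_neg (show ¬((p1, p2).2 = 0 ∧ 1 ≤ (p1, p2).1 ∧ (p1, p2).1 < n - j) from
            fun hh => h2 hh.1)]
  · by_cases h2 : p1 = 1 ∧ p2 = 1
    · rw [if_neg (show ¬((p1, p2).2 = 0 ∧ (p1, p2).1 < n - j) from fun hh => by omega),
        if_pos (show (p1, p2) = (1, 1) by simp [Prod.ext_iff]; omega),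
        if_neg (show ¬((p1, p2).1 = 0 ∧ (p1, p2).2 < j) from fun hh => h1 hh.1),
        if_pos (show (p1, p2) = (1, 1) by simp [Prod.ext_iff]; omega)]
    · by_cases h3 : p2 = 0 ∧ p1 < n - j
      · rw [if_pos (show (p1, p2).2 = 0 ∧ (p1, p2).1 < n - j from h3),
          if_neg (show ¬((p1, p2).1 = 0 ∧ (p1, p2).2 < j) from fun hh => h1 hh.1),
          if_neg (show (p1, p2) ≠ (1, 1) by simp [Prod.ext_iff]; omega),
          if_pos (show (p1, p2).2 = 0 ∧ 1 ≤ (p1, p2).1 ∧ (p1, p2).1 < n - j from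
            ⟨h3.1, by omega, h3.2⟩)]
      · rw [if_neg (show ¬((p1, p2).2 = 0 ∧ (p1, p2).1 < n - j) from h3),
          if_neg (show (p1, p2) ≠ (1, 1) by simp [Prod.ext_iff]; omega),
          if_neg (show ¬((p1, p2).1 = 0 ∧ 1 ≤ (p1, p2).2 ∧ (p1, p2).2 < j) from
            fun hh => h1 hh.1),
          if_neg (show ¬((p1, p2).1 = 0 ∧ (p1, p2).2 < j) from fun hh => h1 hh.1),
          if_neg (show (p1, p2) ≠ (1, 1) by simp [Prod.ext_iff]; omega),
          if_neg (show ¬((p1, p2).2 = 0 ∧ 1 ≤ (p1, p2).1 ∧ (p1, p2).1 < n - j) from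
            fun hh => h3 ⟨hh.1, hh.2.2⟩)]

end CaseLemmas

section SytMaster
variable {n j : ℕ}

theorem ncard_Iio (k : ℕ) : (Set.Iio k).ncard = k := by
  rw [← Finset.coe_Iio, Set.ncard_coe_finset, Nat.card_Iio]

theorem ncard_rowFull (j : ℕ) : {p : ℕ × ℕ | p.1 = 0 ∧ p.2 < j}.ncard = j := by
  have he : {p : ℕ × ℕ | p.1 = 0 ∧ p.2 < j} = (fun c => ((0:ℕ), c)) '' Set.Iio j := by
    ext ⟨p1, p2⟩
    constructor
    · rintro ⟨h1, h2⟩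
      exact ⟨p2, h2, by simp_all⟩
    · rintro ⟨c, hc, he⟩
      simp only [Prod.mk.injEq] at he
      exact ⟨he.1.symm, he.2 ▸ hc⟩
  rw [he, Set.ncard_image_of_injective _ (fun a b hab => by simpa using hab), ncard_Iio]

theorem ncard_colFull (m : ℕ) : {p : ℕ × ℕ | p.2 = 0 ∧ p.1 < m}.ncard = m := by
  have he : {p : ℕ × ℕ | p.2 = 0 ∧ p.1 < m} = (fun r => (r, (0:ℕ))) '' Set.Iio m := by
    ext ⟨p1, p2⟩
    constructor
    · rintro ⟨h1, h2⟩
      exact ⟨p1, h2, by simp_all⟩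
    · rintro ⟨c, hc, he⟩
      simp only [Prod.mk.injEq] at he
      exact ⟨he.2.symm, he.1 ▸ hc⟩
  rw [he, Set.ncard_image_of_injective _ (fun a b hab => by simpa using hab), ncard_Iio]

theorem syt_master (hn : 4 ≤ n) (hj1 : 2 ≤ j) (hj2 : j ≤ n - 2) {T : ℕ × ℕ → ℕ}
    (hT : IsSYT n j T) :
    GH n j (T '' {p : ℕ × ℕ | p.1 = 0 ∧ p.2 < j}) (T '' {p : ℕ × ℕ | p.2 = 0 ∧ p.1 < n - j})
      (T (1,1)) ∧
    T = gfun n j (T '' {p : ℕ × ℕ | p.1 = 0 ∧ p.2 < j})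
      (T '' {p : ℕ × ℕ | p.2 = 0 ∧ p.1 < n - j}) (T (1,1)) := by
  obtain ⟨hzero, ⟨hmap, hinj, hsurj⟩, hrow, hcol⟩ := hT
  have hnj : 2 ≤ n - j := by omega
  set R := T '' {p : ℕ × ℕ | p.1 = 0 ∧ p.2 < j} with hRdef
  set Cf := T '' {p : ℕ × ℕ | p.2 = 0 ∧ p.1 < n - j} with hCdef
  set a := T (1,1) with hadef
  have hcellrow : ∀ c, c < j → cell n j ((0:ℕ), c) := fun c hc => cell_of_row rfl hc
  have hcellcol : ∀ r, r < n - j → cell n j (r, (0:ℕ)) := by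
    intro r hr
    rcases Nat.eq_zero_or_pos r with h | h
    · rw [h]
      exact cell_of_row rfl (by omega)
    · exact cell_of_col hnj rfl h hr
  have hIccF : (Set.Icc 1 n).Finite := Set.finite_Icc 1 n
  have hRF : R.Finite := hIccF.subset (by
    rintro x ⟨p, hp, rfl⟩
    exact hmap (cell_of_row hp.1 hp.2))
  have hCF : Cf.Finite := hIccF.subset (by
    rintro x ⟨p, hp, rfl⟩
    have : cell n j (p.1, (0:ℕ)) := hcellcol p.1 hp.2
    have hpe : p = (p.1, (0:ℕ)) := Prod.ext rfl hp.1
    exact hmap (hpe ▸ this))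
  have hRc : R.ncard = j := by
    rw [hRdef, Set.ncard_image_of_injOn (hinj.mono (fun p hp => cell_of_row hp.1 hp.2)),
      ncard_rowFull]
  have hCc : Cf.ncard = n - j := by
    rw [hCdef, Set.ncard_image_of_injOn (hinj.mono (fun p hp => by
      have hpe : p = (p.1, (0:ℕ)) := Prod.ext rfl hp.1
      exact hpe ▸ hcellcol p.1 hp.2)), ncard_colFull]
  -- T (0,0) = 1
  have hT00le : ∀ p, cell n j p → T (0,0) ≤ T p := by
    intro p hp
    rcases cell_cases hnj hp with ⟨h1, h2⟩ | rfl | ⟨h1, h2, h3⟩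
    · rcases Nat.eq_zero_or_pos p.2 with h | h
      · have : p = ((0:ℕ), (0:ℕ)) := Prod.ext h1 h
        rw [this]
      · have hpe : p = ((0:ℕ), p.2) := Prod.ext h1 rfl
        rw [hpe]
        exact (hrow (0,0) (0, p.2) (hcellrow 0 (by omega)) (hcellrow p.2 h2) rfl h).le
    · have h01 : T (0,0) < T (0,1) :=
        hrow (0,0) (0,1) (hcellrow 0 (by omega)) (hcellrow 1 (by omega)) rfl (by omega)
      have h11 : T (0,1) < T (1,1) :=
        hcol (0,1) (1,1) (hcellrow 1 (by omega)) cell_mid rfl (by omega)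
      omega
    · have hpe : p = (p.1, (0:ℕ)) := Prod.ext rfl h1
      rw [hpe]
      exact (hcol (0,0) (p.1, 0) (hcellrow 0 (by omega)) (hcellcol p.1 h3) rfl (by omega)).le
  have hT00 : T (0,0) = 1 := by
    obtain ⟨p, hp, hp1⟩ := hsurj (show (1:ℕ) ∈ Set.Icc 1 n by constructor <;> omega)
    have h1 := hT00le p hp
    have h2 : T (0,0) ∈ Set.Icc 1 n := hmap (hcellrow 0 (by omega))
    have h3 := h2.1
    omega
  have h1R : (1:ℕ) ∈ R := ⟨(0,0), ⟨rfl, by omega⟩, hT00⟩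
  have h1C : (1:ℕ) ∈ Cf := ⟨(0,0), ⟨rfl, by omega⟩, hT00⟩
  -- forced enumerations
  have hrowEq : ∀ c, c < j → T (0, c) = Nat.nth (· ∈ R) c := by
    intro c hc
    exact nth_unique hRF hRc (f := fun c => T (0, c))
      (fun i hi => ⟨(0, i), ⟨rfl, hi⟩, rfl⟩)
      (fun i₁ i₂ hlt hi₂ => hrow (0, i₁) (0, i₂) (hcellrow i₁ (by omega)) (hcellrow i₂ hi₂)
        rfl hlt) hc
  have hcolEq : ∀ r, r < n - j → T (r, 0) = Nat.nth (· ∈ Cf) r := by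
    intro r hr
    exact nth_unique hCF hCc (f := fun r => T (r, 0))
      (fun i hi => ⟨(i, 0), ⟨rfl, hi⟩, rfl⟩)
      (fun i₁ i₂ hlt hi₂ => hcol (i₁, 0) (i₂, 0) (hcellcol i₁ (by omega)) (hcellcol i₂ hi₂)
        rfl hlt) hr
  have hGH : GH n j R Cf a := by
    refine ⟨h1R, h1C, ?_, ?_, ?_, ?_, hRc, hCc, ?_, ?_⟩
    · -- R ∩ Cf = {1}
      ext x
      constructor
      · rintro ⟨⟨p, hp, rfl⟩, ⟨q, hq, he⟩⟩
        have hpc : cell n j p := cell_of_row hp.1 hp.2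
        have hqc : cell n j q := by
          have hpe : q = (q.1, (0:ℕ)) := Prod.ext rfl hq.1
          exact hpe ▸ hcellcol q.1 hq.2
        have hpq := hinj hqc hpc he
        have hp1 : p.1 = 0 := hp.1
        have hq2 : q.2 = 0 := hq.1
        have : p = ((0:ℕ), (0:ℕ)) := by
          have := Prod.ext_iff.1 hpq
          exact Prod.ext hp1 (by omega)
        rw [this, hT00]
        rfl
      · rintro rfl
        exact ⟨h1R, h1C⟩
    · -- cover
      ext x
      constructor
      · rintro ((⟨p, hp, rfl⟩ | ⟨p, hp, rfl⟩) | hx)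
        · exact hmap (cell_of_row hp.1 hp.2)
        · have hpe : p = (p.1, (0:ℕ)) := Prod.ext rfl hp.1
          exact hmap (hpe ▸ hcellcol p.1 hp.2)
        · simp only [Set.mem_singleton_iff] at hx
          subst hx
          exact hmap cell_mid
      · intro hx
        obtain ⟨p, hp, rfl⟩ := hsurj hx
        rcases cell_cases hnj hp with ⟨h1, h2⟩ | rfl | ⟨h1, h2, h3⟩
        · exact Or.inl (Or.inl ⟨p, ⟨h1, h2⟩, rfl⟩)
        · exact Or.inr rfl
        · exact Or.inl (Or.inr ⟨p, ⟨h1, h3⟩, rfl⟩)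
    · -- a ∉ R
      rintro ⟨p, hp, he⟩
      have := hinj (cell_of_row hp.1 hp.2) cell_mid he
      rw [this] at hp
      exact absurd hp.1 one_ne_zero
    · -- a ∉ Cf
      rintro ⟨p, hp, he⟩
      have hpe : p = (p.1, (0:ℕ)) := Prod.ext rfl hp.1
      have := hinj (hpe ▸ hcellcol p.1 hp.2) cell_mid he
      rw [this] at hp
      exact absurd hp.1 one_ne_zero
    · -- nth R 1 < a
      rw [← hrowEq 1 (by omega)]
      exact hcol (0,1) (1,1) (hcellrow 1 (by omega)) cell_mid rfl (by omega)
    · -- nth Cf 1 < a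
      rw [← hcolEq 1 (by omega)]
      exact hrow (1,0) (1,1) (hcellcol 1 (by omega)) cell_mid rfl (by omega)
  refine ⟨hGH, ?_⟩
  funext p
  by_cases hb1 : p.1 = 0 ∧ p.2 < j
  · rw [gfun_row hb1.1 hb1.2, ← hrowEq p.2 hb1.2]
    have hpe : p = ((0:ℕ), p.2) := Prod.ext hb1.1 rfl
    rw [← hpe]
  · by_cases hb2 : p = (1,1)
    · rw [hb2, gfun_mid]
    · by_cases hb3 : p.2 = 0 ∧ p.1 < n - j
      · rw [gfun_col hGH (by omega) hb3.1 hb3.2, ← hcolEq p.1 hb3.2]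
        have hpe : p = (p.1, (0:ℕ)) := Prod.ext rfl hb3.1
        rw [← hpe]
      · have hnc : ¬ cell n j p := by
          intro hc
          rcases cell_cases hnj hc with ⟨h1, h2⟩ | h | ⟨h1, h2, h3⟩
          · exact hb1 ⟨h1, h2⟩
          · exact hb2 h
          · exact hb3 ⟨h1, h3⟩
        rw [hzero p hnc, gfun_zero hnj hnc]

end SytMaster

section Final
variable {n j : ℕ} {R Cf : Set ℕ} {a : ℕ}

theorem GH.Cf_eq (h : GH n j R Cf a) : Cf = {1} ∪ (Set.Icc 1 n \ (R ∪ {a})) := by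
  ext x
  constructor
  · intro hx
    by_cases hx1 : x = 1
    · exact Or.inl hx1
    · refine Or.inr ⟨h.hCI hx, ?_⟩
      rintro (hxR | hxa)
      · have : x ∈ R ∩ Cf := ⟨hxR, hx⟩
        rw [h.hRC] at this
        exact hx1 this
      · simp only [Set.mem_singleton_iff] at hxa
        exact h.haC (hxa ▸ hx)
  · rintro (hx | ⟨hxI, hxn⟩)
    · simp only [Set.mem_singleton_iff] at hx
      exact hx ▸ h.h1C
    · rw [← h.hcov] at hxI
      rcases hxI with (hx | hx) | hx
      · exact absurd (Or.inl hx) hxn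
      · exact hx
      · exact absurd (Or.inr hx) hxn

theorem GH.amem (h : GH n j R Cf a) (hj1 : 2 ≤ j) : a - 1 ∈ R ∨ a - 1 ∈ Cf := by
  have ha3 := h.ha3 hj1
  have han := h.haI.2
  have hm : a - 1 ∈ Set.Icc 1 n := ⟨by omega, by omega⟩
  rw [← h.hcov] at hm
  rcases hm with (hx | hx) | hx
  · exact Or.inl hx
  · exact Or.inr hx
  · simp only [Set.mem_singleton_iff] at hx
    omega

end Final

section PairMem
variable {n j : ℕ} {R Cf : Set ℕ} {a : ℕ}

theorem union_diff_one {R : Set ℕ} (h : (1:ℕ) ∈ R) : {1} ∪ (R \ {1}) = R := by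
  ext x
  constructor
  · rintro (hx | hx)
    · simp only [Set.mem_singleton_iff] at hx
      exact hx ▸ h
    · exact hx.1
  · intro hx
    by_cases hx1 : x = 1
    · exact Or.inl hx1
    · exact Or.inr ⟨hx, hx1⟩

theorem pair_mem_case1 (hn : 4 ≤ n) (hj1 : 2 ≤ j) (hj2 : j ≤ n - 2)
    (h : GH n j R Cf a) (hm : a - 1 ∈ R) : (R, a) ∈ SpairSet n j := by
  have hn2 : 2 ≤ n := by omega
  have hD := mSet_eq_of_mem (n := n) hn2 h.h1R
  have haV : a ∈ Set.Icc 1 n \ R := ⟨h.haI, h.haR⟩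
  have hamem : a ∈ mSet n R := by
    rw [hD]
    exact ⟨haV, fun hh => hh.2 hm⟩
  have hwit : Nat.nth (· ∈ Cf) 1 ∈ Set.Icc 1 n \ R := by
    have h1 : Nat.nth (· ∈ Cf) 1 ∈ Cf := nth_mem' h.hCF h.hCc (by omega)
    refine ⟨h.hCI h1, fun hR => ?_⟩
    have hin : Nat.nth (· ∈ Cf) 1 ∈ R ∩ Cf := ⟨hR, h1⟩
    rw [h.hRC] at hin
    have h0 : Nat.nth (· ∈ Cf) 1 = Nat.nth (· ∈ Cf) 0 := by rw [h.nthC0]; exact hin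
    have := nth_inj' h.hCF h.hCc (by omega) (by omega) h0
    omega
  refine ⟨h.hRI, h.hRc, hamem, ?_⟩
  rw [hD, sInf_D Set.diff_subset ⟨a, haV⟩]
  have h1 := Nat.sInf_le hwit
  have h2 := h.hc2
  omega

theorem pair_mem_case2 (hn : 4 ≤ n) (hj1 : 2 ≤ j) (hj2 : j ≤ n - 2)
    (h : GH n j R Cf a) (hm : a - 1 ∉ R) : (({a} ∪ (R \ {1}) : Set ℕ), a) ∈ SpairSet n j := by
  have hn2 : 2 ≤ n := by omega
  have ha3 := h.ha3 hj1
  have hWI : ({a} ∪ (R \ {1}) : Set ℕ) ⊆ Set.Icc 1 n := by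
    rintro x (hx | hx)
    · simp only [Set.mem_singleton_iff] at hx
      exact hx ▸ h.haI
    · exact h.hRI hx.1
  have h1W : (1:ℕ) ∉ ({a} ∪ (R \ {1}) : Set ℕ) := by
    rintro ((hx : (1:ℕ) = a) | hx)
    · omega
    · exact hx.2 rfl
  have hWc : ({a} ∪ (R \ {1}) : Set ℕ).ncard = j := by
    have hd : (R \ {1}).ncard = j - 1 := by
      rw [Set.ncard_diff (Set.singleton_subset_iff.2 h.h1R) (Set.finite_singleton 1),
        Set.ncard_singleton, h.hRc]
    rw [Set.singleton_union, Set.ncard_insert_of_notMem (fun hh => h.haR hh.1)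
      ((h.hRF).diff), hd]
    omega
  have hD := mSet_eq_of_not_mem hn2 hWI h1W
  have haW : a ∈ ({a} ∪ (R \ {1}) : Set ℕ) := Or.inl rfl
  have hamem : a ∈ mSet n ({a} ∪ (R \ {1}) : Set ℕ) := by
    rw [hD]
    refine ⟨haW, ?_⟩
    rintro ((hh : a - 1 = a) | hh)
    · omega
    · exact hm hh.1
  have hwit : Nat.nth (· ∈ R) 1 ∈ ({a} ∪ (R \ {1}) : Set ℕ) := by
    have h1 : Nat.nth (· ∈ R) 1 ∈ R := nth_mem' h.hRF h.hRc (by omega)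
    refine Or.inr ⟨h1, fun hh => ?_⟩
    have h0 : Nat.nth (· ∈ R) 1 = Nat.nth (· ∈ R) 0 := by rw [h.nthR0]; exact hh
    have := nth_inj' h.hRF h.hRc (by omega) (by omega) h0
    omega
  refine ⟨hWI, hWc, hamem, ?_⟩
  rw [hD, sInf_D hWI ⟨a, haW⟩]
  have h1 := Nat.sInf_le hwit
  have h2 := h.hr2
  omega

end PairMem

end Aux

/-- the number of SYT of shape `(j,2,1^{n-j-2})` equals the number of
pairs `(W,a)` with `W` a `j`-subset of `{1,...,n}` and `a` a non-minimal element of `m(W)`. -/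
theorem stmt_1 (n j : ℕ) (hn : 4 ≤ n) (hj1 : 2 ≤ j) (hj2 : j ≤ n - 2) :
    Nat.card {T : ℕ × ℕ → ℕ // IsSYT n j T} = Nat.card (SpairSet n j) := by
  have hn2 : 2 ≤ n := by omega
  -- forward membership
  have hmemF : ∀ T : ℕ × ℕ → ℕ, IsSYT n j T → (WT j T, aT T) ∈ SpairSet n j := by
    intro T hT
    obtain ⟨hGH, hTeq⟩ := syt_master hn hj1 hj2 hT
    by_cases hm : T (1,1) - 1 ∈ T '' {p : ℕ × ℕ | p.1 = 0 ∧ p.2 < j}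
    · have hWT := gfun_WT_of_mem hGH hj1 hm
      rw [← hTeq] at hWT
      rw [hWT]
      exact pair_mem_case1 hn hj1 hj2 hGH hm
    · have hWT := gfun_WT_of_not_mem hGH hj1 hm
      rw [← hTeq] at hWT
      rw [hWT]
      exact pair_mem_case2 hn hj1 hj2 hGH hm
  -- injectivity
  have hinj : Set.InjOn (fun T : ℕ × ℕ → ℕ => (WT j T, aT T)) {T | IsSYT n j T} := by
    intro T hT T' hT' he
    simp only [Prod.mk.injEq] at he
    obtain ⟨hGH, hTeq⟩ := syt_master hn hj1 hj2 hT
    obtain ⟨hGH', hTeq'⟩ := syt_master hn hj1 hj2 hT'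
    have ha : T' (1,1) = T (1,1) := he.2.symm
    rw [ha] at hGH' hTeq'
    have hW := he.1
    have ha3 := hGH.ha3 hj1
    -- compute both WT values
    have hR : T '' {p : ℕ × ℕ | p.1 = 0 ∧ p.2 < j} =
        T' '' {p : ℕ × ℕ | p.1 = 0 ∧ p.2 < j} := by
      by_cases hm : T (1,1) - 1 ∈ T '' {p : ℕ × ℕ | p.1 = 0 ∧ p.2 < j} <;>
        by_cases hm' : T (1,1) - 1 ∈ T' '' {p : ℕ × ℕ | p.1 = 0 ∧ p.2 < j}
      · have h1 := gfun_WT_of_mem hGH hj1 hm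
        have h2 := gfun_WT_of_mem hGH' hj1 hm'
        rw [← hTeq] at h1
        rw [← hTeq'] at h2
        rw [← h1, ← h2, hW]
      · have h1 := gfun_WT_of_mem hGH hj1 hm
        have h2 := gfun_WT_of_not_mem hGH' hj1 hm'
        rw [← hTeq] at h1
        rw [← hTeq'] at h2
        exfalso
        have hx : T (1,1) - 1 ∈ WT j T := h1.symm ▸ hm
        rw [hW, h2] at hx
        rcases hx with (hx : T (1,1) - 1 = T (1,1)) | hx
        · omega
        · exact hm' hx.1
      · have h1 := gfun_WT_of_not_mem hGH hj1 hm
        have h2 := gfun_WT_of_mem hGH' hj1 hm'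
        rw [← hTeq] at h1
        rw [← hTeq'] at h2
        exfalso
        have hx : T (1,1) - 1 ∈ WT j T' := h2.symm ▸ hm'
        rw [← hW, h1] at hx
        rcases hx with (hx : T (1,1) - 1 = T (1,1)) | hx
        · omega
        · exact hm hx.1
      · have h1 := gfun_WT_of_not_mem hGH hj1 hm
        have h2 := gfun_WT_of_not_mem hGH' hj1 hm'
        rw [← hTeq] at h1
        rw [← hTeq'] at h2
        have hu : ({T (1,1)} ∪ (T '' {p : ℕ × ℕ | p.1 = 0 ∧ p.2 < j} \ {1}) : Set ℕ) =
            {T (1,1)} ∪ (T' '' {p : ℕ × ℕ | p.1 = 0 ∧ p.2 < j} \ {1}) := by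
          rw [← h1, ← h2, hW]
        have hdiff : (T '' {p : ℕ × ℕ | p.1 = 0 ∧ p.2 < j} \ {1} : Set ℕ) =
            T' '' {p : ℕ × ℕ | p.1 = 0 ∧ p.2 < j} \ {1} := by
          ext x
          constructor
          · intro hx
            have : x ∈ ({T (1,1)} ∪ (T' '' {p : ℕ × ℕ | p.1 = 0 ∧ p.2 < j} \ {1}) : Set ℕ) :=
              hu ▸ Or.inr hx
            rcases this with (hh : x = T (1,1)) | hh
            · exact absurd (hh ▸ hx.1) hGH.haR
            · exact hh
          · intro hx
            have : x ∈ ({T (1,1)} ∪ (T '' {p : ℕ × ℕ | p.1 = 0 ∧ p.2 < j} \ {1}) : Set ℕ) :=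
              hu.symm ▸ Or.inr hx
            rcases this with (hh : x = T (1,1)) | hh
            · exact absurd (hh ▸ hx.1) hGH'.haR
            · exact hh
        rw [← union_diff_one hGH.h1R, ← union_diff_one hGH'.h1R, hdiff]
    have hC : T '' {p : ℕ × ℕ | p.2 = 0 ∧ p.1 < n - j} =
        T' '' {p : ℕ × ℕ | p.2 = 0 ∧ p.1 < n - j} := by
      rw [hGH.Cf_eq, hGH'.Cf_eq, hR]
    rw [hTeq, hTeq', hR, hC]
  -- surjectivity
  have hsurj' : ∀ p ∈ SpairSet n j, ∃ T, IsSYT n j T ∧ (WT j T, aT T) = p := by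
    rintro ⟨W, a⟩ hp
    obtain ⟨hWI, hWc, hmem, hne⟩ := hp
    by_cases h1W : 1 ∈ W
    · rw [mSet_eq_of_mem hn2 h1W] at hmem hne
      have hVne : (Set.Icc 1 n \ W).Nonempty := ⟨a, hmem.1⟩
      rw [sInf_D Set.diff_subset hVne] at hne
      obtain ⟨hGH, hfeq, hamW⟩ := case1_GH hn hj1 hj2 hWI hWc h1W hmem.1 hmem.2 hne
      refine ⟨fillRow n j W a, ?_, ?_⟩
      · rw [hfeq]
        exact hGH.isSYT hn hj1 hj2
      · have hWT : WT j (fillRow n j W a) = W := by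
          rw [hfeq]
          exact gfun_WT_of_mem hGH hj1 hamW
        have haT : aT (fillRow n j W a) = a := by
          rw [hfeq]
          exact gfun_aT
        rw [hWT, haT]
    · rw [mSet_eq_of_not_mem hn2 hWI h1W] at hmem hne
      rw [sInf_D hWI ⟨a, hmem.1⟩] at hne
      obtain ⟨hGH, hfeq, hnma⟩ := case2_GH hn hj1 hj2 hWI hWc h1W hmem.1 hmem.2 hne
      refine ⟨fillCol n j W a, ?_, ?_⟩
      · rw [hfeq]
        exact hGH.isSYT hn hj1 hj2
      · have hWT : WT j (fillCol n j W a) = W := by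
          rw [hfeq]
          rw [gfun_WT_of_not_mem hGH hj1 hnma]
          ext x
          constructor
          · rintro ((hx : x = a) | ⟨(hx1 | hx2), hx3⟩)
            · exact hx ▸ hmem.1
            · exact absurd hx1 hx3
            · exact hx2.1
          · intro hx
            by_cases hxa : x = a
            · exact Or.inl hxa
            · refine Or.inr ⟨Or.inr ⟨hx, hxa⟩, ?_⟩
              intro hh
              simp only [Set.mem_singleton_iff] at hh
              exact h1W (hh ▸ hx)
        have haT : aT (fillCol n j W a) = a := by
          rw [hfeq]
          exact gfun_aT
        rw [hWT, haT]
  have key : (fun T : ℕ × ℕ → ℕ => (WT j T, aT T)) '' {T | IsSYT n j T} = SpairSet n j := by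
    ext p
    constructor
    · rintro ⟨T, hT, rfl⟩
      exact hmemF T hT
    · intro hp
      obtain ⟨T, h1, h2⟩ := hsurj' p hp
      exact ⟨T, h1, h2⟩
  calc Nat.card {T : ℕ × ℕ → ℕ // IsSYT n j T}
      = {T : ℕ × ℕ → ℕ | IsSYT n j T}.ncard := Nat.card_coe_set_eq _
    _ = ((fun T : ℕ × ℕ → ℕ => (WT j T, aT T)) '' {T | IsSYT n j T}).ncard :=
        (Set.ncard_image_of_injOn hinj).symm
    _ = (SpairSet n j).ncard := by rw [key]
    _ = Nat.card (SpairSet n j) := (Nat.card_coe_set_eq _).symm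
end

section
/- Let n ≥ 4, 2 ≤ j ≤ n−2, and let W be a j-element subset of {1,...,n} with 1 ∈ W. Suppose a is an element of m(W) = {min(X) : X a connected component of C_n[complement of W]} with a ≠ min(m(W)). Then the filling T of the Young diagram of shape (j, 2, 1^{n−j−2}) obtained by placing the elements of W in increasing order in the first row, placing a in position (2,2), and placing the elements of (complement of W) \ {a} in increasing order in the remaining boxes of the first column, is a standard Young tableau. -/
open scoped Classical

/-- when `1 ∈ W` and `a` is a non-minimal component minimum of the
complement, the filling `fillRow` is a standard Young tableau. -/
theorem stmt_2 (n j : ℕ) (hn : 4 ≤ n) (hj1 : 2 ≤ j) (hj2 : j ≤ n - 2)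
    (W : Set ℕ) (hW : W ⊆ Set.Icc 1 n) (hcard : W.ncard = j) (h1 : 1 ∈ W)
    (a : ℕ) (ha : a ∈ compMins n (Set.Icc 1 n \ W))
    (hmin : a ≠ sInf (compMins n (Set.Icc 1 n \ W))) :
    IsSYT n j (fillRow n j W a) := by
  classical
  obtain ⟨haW', hamin⟩ := ha
  have hnj : 2 ≤ n - j := by omega
  have hWfin : W.Finite := (Set.finite_Icc 1 n).subset hW
  have hW'fin : (Set.Icc 1 n \ W).Finite := (Set.finite_Icc 1 n).diff
  have hAfin : ((Set.Icc 1 n \ W) \ {a}).Finite := hW'fin.diff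
  have hWf : (setOf (· ∈ W)).Finite := hWfin
  have hAf : (setOf (· ∈ (Set.Icc 1 n \ W) \ {a})).Finite := hAfin
  have hWtf : hWf.toFinset.card = j := by
    rw [← Set.ncard_eq_toFinset_card _ hWf]; exact hcard
  -- basic membership facts
  have haIcc : a ∈ Set.Icc 1 n := haW'.1
  have haW : a ∉ W := haW'.2
  have han : a ≤ n := (Set.mem_Icc.mp haIcc).2
  have ha2 : 2 ≤ a := by
    obtain ⟨h1a, h2a⟩ := Set.mem_Icc.mp haIcc
    rcases Nat.lt_or_ge a 2 with h | h
    · interval_cases a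
      exact absurd h1 haW
    · exact h
  -- cardinalities
  have hIcc_card : (Set.Icc 1 n).ncard = n := by
    rw [← Finset.coe_Icc, Set.ncard_coe_finset, Nat.card_Icc]; omega
  have hW'card : (Set.Icc 1 n \ W).ncard = n - j := by
    rw [Set.ncard_diff hW hWfin, hIcc_card, hcard]
  have hAcard : ((Set.Icc 1 n \ W) \ {a}).ncard = n - j - 1 := by
    rw [Set.ncard_diff_singleton_of_mem haW', hW'card]
  have hAtf : hAf.toFinset.card = n - j - 1 := by
    rw [← Set.ncard_eq_toFinset_card _ hAf]; exact hAcard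
  -- the minimum m of the complement
  have hmW' : sInf (Set.Icc 1 n \ W) ∈ Set.Icc 1 n \ W := Nat.sInf_mem ⟨a, haW'⟩
  have hm2 : 2 ≤ sInf (Set.Icc 1 n \ W) := by
    rcases hmW' with ⟨⟨hm1, hmn⟩, hmW⟩
    rcases Nat.lt_or_ge (sInf (Set.Icc 1 n \ W)) 2 with h | h
    · interval_cases h' : sInf (Set.Icc 1 n \ W)
      · exact absurd h1 (by rw [← h'] at hmW ⊢; exact hmW)
    · exact h
  have hcm : sInf (compMins n (Set.Icc 1 n \ W)) = sInf (Set.Icc 1 n \ W) := by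
    have hmem : sInf (Set.Icc 1 n \ W) ∈ compMins n (Set.Icc 1 n \ W) :=
      ⟨hmW', fun b hb _ => Nat.sInf_le hb⟩
    refine le_antisymm (Nat.sInf_le hmem) ?_
    obtain ⟨hmem2, -⟩ := Nat.sInf_mem (⟨_, hmem⟩ : (compMins n (Set.Icc 1 n \ W)).Nonempty)
    exact Nat.sInf_le hmem2
  have hma : sInf (Set.Icc 1 n \ W) < a := by
    refine lt_of_le_of_ne (Nat.sInf_le haW') ?_
    intro h
    exact hmin (by rw [hcm, h])
  have ha3 : 3 ≤ a := by omega
  -- a - 1 ∈ W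
  have ha1W : a - 1 ∈ W := by
    by_contra hnot
    have hmem : a - 1 ∈ Set.Icc 1 n \ W := ⟨⟨by omega, by omega⟩, hnot⟩
    have hadj : (cycleGraph n).Adj a (a - 1) := by
      unfold cycleGraph; exact ⟨haIcc, ⟨by omega, by omega⟩, by omega,
        Or.inr (by rw [show a - 1 + 1 = a by omega])⟩
    have hreach : ((cycleGraph n).induce (Set.Icc 1 n \ W)).Reachable ⟨a, haW'⟩ ⟨a - 1, hmem⟩ :=
      SimpleGraph.Adj.reachable hadj
    have := hamin (a - 1) hmem hreach
    omega
  -- nth facts for W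
  have hnthW_mem : ∀ c < j, Nat.nth (· ∈ W) c ∈ W := fun c hc =>
    Nat.nth_mem_of_lt_card hWf (lt_of_lt_of_eq hc hWtf.symm)
  have hnthW0 : Nat.nth (· ∈ W) 0 = 1 := by
    rw [Nat.nth_zero]
    exact le_antisymm (Nat.sInf_le h1) (hW (Nat.sInf_mem ⟨1, h1⟩)).1
  have hnthW1 : Nat.nth (· ∈ W) 1 < a := by
    by_contra hlt
    push_neg at hlt
    have hle : a - 1 ≤ Nat.nth (· ∈ W) 0 :=
      Nat.le_nth_of_lt_nth_succ (by rw [zero_add]; omega) ha1W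
    omega
  -- nth facts for A
  have hmA : sInf (Set.Icc 1 n \ W) ∈ (Set.Icc 1 n \ W) \ {a} :=
    ⟨hmW', by simp; omega⟩
  have hnthA_mem : ∀ k < n - j - 1, Nat.nth (· ∈ (Set.Icc 1 n \ W) \ {a}) k
      ∈ (Set.Icc 1 n \ W) \ {a} := fun k hk =>
    Nat.nth_mem_of_lt_card hAf (lt_of_lt_of_eq hk hAtf.symm)
  have hnthA0 : Nat.nth (· ∈ (Set.Icc 1 n \ W) \ {a}) 0 = sInf (Set.Icc 1 n \ W) := by
    rw [Nat.nth_zero]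
    refine le_antisymm (Nat.sInf_le hmA) ?_
    exact Nat.sInf_le (Nat.sInf_mem (⟨_, hmA⟩ : ((Set.Icc 1 n \ W) \ {a}).Nonempty)).1
  -- cell characterization
  have hcell : ∀ p : ℕ × ℕ, cell n j p ↔
      (p.1 = 0 ∧ p.2 < j) ∨ p = (1, 1) ∨ (p.2 = 0 ∧ 1 ≤ p.1 ∧ p.1 < n - j) := by
    rintro ⟨p1, p2⟩
    simp only [cell, Prod.ext_iff, Prod.fst, Prod.snd]
    omega
  -- value lemmas
  have vR : ∀ p : ℕ × ℕ, p.1 = 0 → p.2 < j → fillRow n j W a p = Nat.nth (· ∈ W) p.2 := by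
    intro p h0 hj'
    simp [fillRow, h0, hj']
  have vM : fillRow n j W a (1, 1) = a := by simp [fillRow]
  have vC : ∀ p : ℕ × ℕ, p.2 = 0 → 1 ≤ p.1 → p.1 < n - j →
      fillRow n j W a p = Nat.nth (· ∈ (Set.Icc 1 n \ W) \ {a}) (p.1 - 1) := by
    intro p h0 h1' h2'
    have hne : p ≠ (1, 1) := by
      intro h; rw [h] at h0; simp at h0
    have hp1 : ¬ (p.1 = 0 ∧ p.2 < j) := by omega
    simp only [fillRow]
    rw [if_neg hp1, if_neg hne, if_pos ⟨h0, h1', h2'⟩]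
  refine ⟨?_, ⟨?_, ?_, ?_⟩, ?_, ?_⟩
  · -- zero outside
    intro p hp
    rw [hcell, not_or, not_or] at hp
    obtain ⟨hp1, hp2, hp3⟩ := hp
    simp only [fillRow, if_neg hp1, if_neg hp2, if_neg hp3]
  · -- MapsTo
    intro p hp
    rcases (hcell p).1 hp with ⟨h0, hj'⟩ | rfl | ⟨h0, h1', h2'⟩
    · rw [vR p h0 hj']; exact hW (hnthW_mem _ hj')
    · rw [vM]; exact haIcc
    · rw [vC p h0 h1' h2']
      exact (hnthA_mem _ (by omega)).1.1
  · -- InjOn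
    intro p hp q hq heq
    rcases (hcell p).1 hp with ⟨hp0, hpj⟩ | hpm | ⟨hp0, hp1, hp2⟩ <;>
      rcases (hcell q).1 hq with ⟨hq0, hqj⟩ | hqm | ⟨hq0, hq1, hq2⟩
    · -- R R
      rw [vR p hp0 hpj, vR q hq0 hqj] at heq
      have h2 := Nat.nth_injOn hWf (by simp only [Set.mem_Iio]; exact lt_of_lt_of_eq hpj hWtf.symm)
        (by simp only [Set.mem_Iio]; exact lt_of_lt_of_eq hqj hWtf.symm) heq
      exact Prod.ext (hp0.trans hq0.symm) h2
    · -- R M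
      rw [vR p hp0 hpj, hqm, vM] at heq
      have h1 := hnthW_mem p.2 hpj
      rw [heq] at h1
      exact absurd h1 haW
    · -- R C
      rw [vR p hp0 hpj, vC q hq0 hq1 hq2] at heq
      have h1 := hnthW_mem p.2 hpj
      have h2 := hnthA_mem (q.1 - 1) (by omega)
      rw [heq] at h1
      exact absurd h1 h2.1.2
    · -- M R
      rw [hpm, vM, vR q hq0 hqj] at heq
      have h1 := hnthW_mem q.2 hqj
      rw [← heq] at h1
      exact absurd h1 haW
    · exact hpm.trans hqm.symm
    · -- M C
      rw [hpm, vM, vC q hq0 hq1 hq2] at heq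
      have h2 := hnthA_mem (q.1 - 1) (by omega)
      exact absurd (Set.mem_singleton_iff.mpr heq.symm) h2.2
    · -- C R
      rw [vC p hp0 hp1 hp2, vR q hq0 hqj] at heq
      have h1 := hnthW_mem q.2 hqj
      have h2 := hnthA_mem (p.1 - 1) (by omega)
      rw [heq] at h2
      exact absurd h1 h2.1.2
    · -- C M
      rw [vC p hp0 hp1 hp2, hqm, vM] at heq
      have h2 := hnthA_mem (p.1 - 1) (by omega)
      exact absurd (Set.mem_singleton_iff.mpr heq) h2.2
    · -- C C
      rw [vC p hp0 hp1 hp2, vC q hq0 hq1 hq2] at heq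
      have h2 := Nat.nth_injOn hAf (by simp only [Set.mem_Iio]; exact lt_of_lt_of_eq (by omega : p.1 - 1 < n - j - 1) hAtf.symm)
        (by simp only [Set.mem_Iio]; exact lt_of_lt_of_eq (by omega : q.1 - 1 < n - j - 1) hAtf.symm) heq
      have h3 : p.1 = q.1 := by omega
      exact Prod.ext h3 (hp0.trans hq0.symm)
  · -- SurjOn
    intro x hx
    by_cases hxW : x ∈ W
    · obtain ⟨c, hc, hcx⟩ := Nat.exists_lt_card_finite_nth_eq hWf hxW
      replace hc : c < j := lt_of_lt_of_eq hc hWtf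
      exact ⟨(0, c), (hcell _).2 (Or.inl ⟨rfl, hc⟩), by rw [vR _ rfl hc]; exact hcx⟩
    · by_cases hxa : x = a
      · exact ⟨(1, 1), (hcell _).2 (Or.inr (Or.inl rfl)), by rw [vM, hxa]⟩
      · have hxA : x ∈ (Set.Icc 1 n \ W) \ {a} := ⟨⟨hx, hxW⟩, hxa⟩
        obtain ⟨k, hk, hkx⟩ := Nat.exists_lt_card_finite_nth_eq hAf hxA
        replace hk : k < n - j - 1 := lt_of_lt_of_eq hk hAtf
        refine ⟨(k + 1, 0), (hcell _).2 (Or.inr (Or.inr ⟨rfl, by omega, by omega⟩)), ?_⟩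
        rw [vC _ rfl (by omega) (by omega)]
        simpa using hkx
  · -- rows increasing
    intro p q hp hq h12 hlt
    rcases (hcell p).1 hp with ⟨hp0, hpj⟩ | hpm | ⟨hp0, hp1, hp2⟩ <;>
      rcases (hcell q).1 hq with ⟨hq0, hqj⟩ | hqm | ⟨hq0, hq1, hq2⟩
    · rw [vR p hp0 hpj, vR q hq0 hqj]
      exact Nat.nth_lt_nth_of_lt_card hWf hlt (lt_of_lt_of_eq hqj hWtf.symm)
    · have hq1' : q.1 = 1 := by rw [hqm]
      omega
    · omega
    · have hp1' : p.1 = 1 := by rw [hpm]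
      omega
    · have hp2' : p.2 = 1 := by rw [hpm]
      have hq2' : q.2 = 1 := by rw [hqm]
      omega
    · have hp2' : p.2 = 1 := by rw [hpm]
      omega
    · omega
    · -- C M : p = (1, 0), q = (1,1)
      have hp1' : p.1 = 1 := by
        have hq1' : q.1 = 1 := by rw [hqm]
        omega
      rw [vC p hp0 hp1 hp2, hqm, vM, hp1', show (1:ℕ) - 1 = 0 from rfl, hnthA0]
      exact hma
    · omega
  · -- columns increasing
    intro p q hp hq h12 hlt
    rcases (hcell p).1 hp with ⟨hp0, hpj⟩ | hpm | ⟨hp0, hp1, hp2⟩ <;>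
      rcases (hcell q).1 hq with ⟨hq0, hqj⟩ | hqm | ⟨hq0, hq1, hq2⟩
    · omega
    · -- R M: p = (0, 1)
      have hp2' : p.2 = 1 := by
        have hq2' : q.2 = 1 := by rw [hqm]
        omega
      rw [vR p hp0 hpj, hqm, vM, hp2']
      exact hnthW1
    · -- R C: p = (0, 0)
      have hp2' : p.2 = 0 := by omega
      rw [vR p hp0 hpj, vC q hq0 hq1 hq2, hp2', hnthW0]
      have h0le : Nat.nth (· ∈ (Set.Icc 1 n \ W) \ {a}) 0 ≤
          Nat.nth (· ∈ (Set.Icc 1 n \ W) \ {a}) (q.1 - 1) :=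
        Nat.nth_le_nth_of_lt_card hAf (Nat.zero_le _) (lt_of_lt_of_eq (by omega) hAtf.symm)
      rw [hnthA0] at h0le
      omega
    · have hp1' : p.1 = 1 := by rw [hpm]
      omega
    · have hp1' : p.1 = 1 := by rw [hpm]
      have hq1' : q.1 = 1 := by rw [hqm]
      omega
    · have hp2' : p.2 = 1 := by rw [hpm]
      omega
    · omega
    · have hq2' : q.2 = 1 := by rw [hqm]
      omega
    · rw [vC p hp0 hp1 hp2, vC q hq0 hq1 hq2]
      exact Nat.nth_lt_nth_of_lt_card hAf (by omega) (lt_of_lt_of_eq (by omega) hAtf.symm)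
end

section
/- Let n ≥ 4, 2 ≤ j ≤ n−2, and let W be a j-element subset of {1,...,n} with 1 ∉ W. Suppose a is an element of m(W) = {min(X) : X a connected component of C_n[W]} with a ≠ min(m(W)). Then the filling T of the Young diagram of shape (j, 2, 1^{n−j−2}) obtained by placing the elements of the complement of W in increasing order in the first column, placing a in position (2,2), and placing the elements of W \ {a} in increasing order in the remaining boxes of the first row, is a standard Young tableau. -/
open scoped Classical

/-- when `1 ∉ W` and `a` is a non-minimal component minimum of
`C_n[W]`, the filling `fillCol` is a standard Young tableau. -/
theorem stmt_3 (n j : ℕ) (hn : 4 ≤ n) (hj1 : 2 ≤ j) (hj2 : j ≤ n - 2)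
    (W : Set ℕ) (hW : W ⊆ Set.Icc 1 n) (hcard : W.ncard = j) (h1 : 1 ∉ W)
    (a : ℕ) (ha : a ∈ compMins n W) (hmin : a ≠ sInf (compMins n W)) :
    IsSYT n j (fillCol n j W a) := by
  classical
  obtain ⟨haW, hamin⟩ := ha
  have hIccfin : (Set.Icc 1 n).Finite := Set.finite_Icc 1 n
  have hWfin : W.Finite := hIccfin.subset hW
  set C : Set ℕ := Set.Icc 1 n \ W with hCdef
  set R : Set ℕ := W \ {a} with hRdef
  have hCfin' : C.Finite := hIccfin.diff
  have hRfin' : R.Finite := hWfin.diff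
  have hCfin : (Set.ofPred (· ∈ C)).Finite := hCfin'
  have hRfin : (Set.ofPred (· ∈ R)).Finite := hRfin'
  have hIccN : (Set.Icc 1 n).ncard = n := by
    rw [← Finset.coe_Icc, Set.ncard_coe_finset, Nat.card_Icc]; omega
  have hCcard : hCfin.toFinset.card = n - j := by
    rw [← Set.ncard_eq_toFinset_card _ hCfin]
    show C.ncard = n - j
    rw [hCdef, Set.ncard_diff hW hWfin, hIccN, hcard]
  have hRcard : hRfin.toFinset.card = j - 1 := by
    rw [← Set.ncard_eq_toFinset_card _ hRfin]
    show R.ncard = j - 1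
    rw [hRdef, Set.ncard_diff_singleton_of_mem haW, hcard]
  -- basic facts about W and a
  have hW2 : ∀ x ∈ W, 2 ≤ x := by
    intro x hx
    have h1x := (hW hx).1
    have : x ≠ 1 := fun h => h1 (h ▸ hx)
    omega
  have hWne : W.Nonempty := ⟨a, haW⟩
  have hminW : sInf W ∈ W := Nat.sInf_mem hWne
  have hcompsub : compMins n W ⊆ W := fun b hb => hb.choose
  have hminmem : sInf W ∈ compMins n W := ⟨hminW, fun b hb _ => Nat.sInf_le hb⟩
  have hsInfeq : sInf (compMins n W) = sInf W := by
    refine le_antisymm (Nat.sInf_le hminmem) ?_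
    exact le_csInf ⟨sInf W, hminmem⟩ fun b hb => Nat.sInf_le (hcompsub hb)
  rw [hsInfeq] at hmin
  have hage : sInf W < a := (Nat.sInf_le haW).lt_of_ne (Ne.symm hmin)
  have hm2 : 2 ≤ sInf W := hW2 _ hminW
  have ha3 : 3 ≤ a := by omega
  have haIcc : a ∈ Set.Icc 1 n := hW haW
  have han : a ≤ n := haIcc.2
  -- a - 1 is not in W
  have hpred : a - 1 ∉ W := by
    intro hb
    have hadj : (cycleGraph n).Adj a (a - 1) := by
      unfold cycleGraph; exact ⟨haIcc, hW hb, by omega, Or.inr (by rw [show a - 1 + 1 = a by omega])⟩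
    have hadj' : ((cycleGraph n).induce W).Adj ⟨a, haW⟩ ⟨a - 1, hb⟩ := hadj
    have := hamin (a - 1) hb hadj'.reachable
    omega
  -- facts about C
  have h1C : (1 : ℕ) ∈ C := ⟨⟨le_refl 1, by omega⟩, h1⟩
  have hpredC : a - 1 ∈ C := ⟨⟨by omega, by omega⟩, hpred⟩
  have hCnth0 : Nat.nth (· ∈ C) 0 = 1 := by
    rw [Nat.nth_zero]
    refine le_antisymm (Nat.sInf_le h1C) ?_
    have hmem : sInf (setOf (· ∈ C)) ∈ setOf (· ∈ C) := Nat.sInf_mem ⟨1, h1C⟩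
    exact hmem.1.1
  have hCnth1 : Nat.nth (· ∈ C) 1 < a := by
    have h1le : Nat.nth (· ∈ C) 1 ≤ a - 1 := by
      rw [Nat.nth_eq_sInf]
      refine Nat.sInf_le ⟨hpredC, ?_⟩
      intro k hk
      have : k = 0 := by omega
      subst this
      rw [hCnth0]; omega
    omega
  have hCmem : ∀ i, i < n - j → Nat.nth (· ∈ C) i ∈ C := fun i hi =>
    Nat.nth_mem_of_lt_card hCfin (by omega)
  -- facts about R
  have hminR : sInf W ∈ R := ⟨hminW, by simp; omega⟩
  have hRnth0 : Nat.nth (· ∈ R) 0 < a := by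
    rw [Nat.nth_zero]
    exact lt_of_le_of_lt (Nat.sInf_le hminR) hage
  have hRmem : ∀ k, k < j - 1 → Nat.nth (· ∈ R) k ∈ R := fun k hk =>
    Nat.nth_mem_of_lt_card hRfin (by omega)
  -- cell classification
  have hnj2 : 2 ≤ n - j := by omega
  have hclass : ∀ r c : ℕ, cell n j (r, c) →
      (c = 0 ∧ r < n - j) ∨ (r = 1 ∧ c = 1) ∨ (r = 0 ∧ 1 ≤ c ∧ c < j) := by
    intro r c hc
    have hc' : (r = 0 ∧ c < j) ∨ (r = 1 ∧ c < 2) ∨ (2 ≤ r ∧ r < n - j ∧ c = 0) := hc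
    omega
  have hcellA : ∀ r, r < n - j → cell n j (r, 0) := by
    intro r hr
    show (r = 0 ∧ 0 < j) ∨ (r = 1 ∧ 0 < 2) ∨ (2 ≤ r ∧ r < n - j ∧ (0:ℕ) = 0)
    omega
  have hcellB : cell n j (1, 1) :=
    Or.inr (Or.inl ⟨rfl, by omega⟩)
  have hcellC : ∀ c, 1 ≤ c → c < j → cell n j (0, c) := by
    intro c h1c h2c
    exact Or.inl ⟨rfl, h2c⟩
  -- evaluation lemmas
  have hTA : ∀ r, r < n - j → fillCol n j W a (r, 0) = Nat.nth (· ∈ C) r := by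
    intro r hr
    unfold fillCol
    rw [if_pos ⟨rfl, hr⟩]
  have hTB : fillCol n j W a (1, 1) = a := by
    unfold fillCol
    rw [if_neg (by simp), if_pos rfl]
  have hTC : ∀ c, 1 ≤ c → c < j →
      fillCol n j W a (0, c) = Nat.nth (· ∈ R) (c - 1) := by
    intro c h1c h2c
    unfold fillCol
    rw [if_neg (fun h => by omega : ¬(((0, c) : ℕ × ℕ).2 = 0 ∧ ((0, c) : ℕ × ℕ).1 < n - j)),
      if_neg (by simp), if_pos ⟨rfl, h1c, h2c⟩]
  refine ⟨?_, ⟨?_, ?_, ?_⟩, ?_, ?_⟩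
  · -- zero outside
    rintro ⟨r, c⟩ hp
    unfold fillCol
    rw [if_neg, if_neg, if_neg]
    · rintro ⟨h1', h2', h3'⟩
      exact hp (Or.inl ⟨h1', h3'⟩)
    · intro h
      rw [show ((r, c) : ℕ × ℕ) = (1, 1) from h] at hp
      exact hp hcellB
    · rintro ⟨h1', h2'⟩
      refine hp ?_
      rw [show ((r, c) : ℕ × ℕ) = (r, 0) by rw [show c = 0 from h1']]
      exact hcellA r h2'
  · -- MapsTo
    rintro ⟨r, c⟩ hp
    rcases hclass r c hp with ⟨hc0, hr⟩ | ⟨hr, hc⟩ | ⟨hr, h1c, h2c⟩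
    · subst hc0
      rw [hTA r hr]
      exact (hCmem r hr).1
    · subst hr; subst hc
      rw [hTB]; exact haIcc
    · subst hr
      rw [hTC c h1c h2c]
      exact hW (hRmem (c - 1) (by omega)).1
  · -- InjOn
    rintro ⟨r, c⟩ hp ⟨r', c'⟩ hq heq
    have hCnotW : ∀ x ∈ C, x ∉ W := fun x hx => hx.2
    rcases hclass r c hp with ⟨hc0, hr⟩ | ⟨hr, hc⟩ | ⟨hr, h1c, h2c⟩ <;>
      rcases hclass r' c' hq with ⟨hc0', hr'⟩ | ⟨hr', hc'⟩ | ⟨hr', h1c', h2c'⟩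
    · subst hc0; subst hc0'
      rw [hTA r hr, hTA r' hr'] at heq
      have := Nat.nth_injOn hCfin (Set.mem_Iio.mpr (by omega))
        (Set.mem_Iio.mpr (by omega)) heq
      simp [this]
    · subst hc0; subst hr'; subst hc'
      rw [hTA r hr, hTB] at heq
      exact absurd haW (heq ▸ hCnotW _ (hCmem r hr))
    · subst hc0; subst hr'
      rw [hTA r hr, hTC c' h1c' h2c'] at heq
      exact absurd (hRmem (c' - 1) (by omega)).1 (heq ▸ hCnotW _ (hCmem r hr))
    · subst hr; subst hc; subst hc0'
      rw [hTB, hTA r' hr'] at heq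
      exact absurd haW (heq.symm ▸ hCnotW _ (hCmem r' hr'))
    · subst hr; subst hc; subst hr'; subst hc'; rfl
    · subst hr; subst hc; subst hr'
      rw [hTB, hTC c' h1c' h2c'] at heq
      exact absurd rfl (heq ▸ (hRmem (c' - 1) (by omega)).2)
    · subst hr; subst hc0'
      rw [hTC c h1c h2c, hTA r' hr'] at heq
      exact absurd (hRmem (c - 1) (by omega)).1 (heq.symm ▸ hCnotW _ (hCmem r' hr'))
    · subst hr; subst hr'; subst hc'
      rw [hTC c h1c h2c, hTB] at heq
      exact absurd rfl (heq.symm ▸ (hRmem (c - 1) (by omega)).2)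
    · subst hr; subst hr'
      rw [hTC c h1c h2c, hTC c' h1c' h2c'] at heq
      have := Nat.nth_injOn hRfin (Set.mem_Iio.mpr (by omega))
        (Set.mem_Iio.mpr (by omega)) heq
      have : c = c' := by omega
      simp [this]
  · -- SurjOn
    intro x hx
    by_cases hxW : x ∈ W
    · by_cases hxa : x = a
      · exact ⟨(1, 1), hcellB, by rw [hTB, hxa]⟩
      · have hxR : x ∈ R := ⟨hxW, hxa⟩
        obtain ⟨k, hk, hnk⟩ := Nat.exists_lt_card_finite_nth_eq hRfin hxR
        refine ⟨(0, k + 1), hcellC (k + 1) (by omega) (by omega), ?_⟩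
        rw [hTC (k + 1) (by omega) (by omega)]
        simpa using hnk
    · have hxC : x ∈ C := ⟨hx, hxW⟩
      obtain ⟨k, hk, hnk⟩ := Nat.exists_lt_card_finite_nth_eq hCfin hxC
      exact ⟨(k, 0), hcellA k (by omega), by rw [hTA k (by omega)]; exact hnk⟩
  · -- rows increasing
    rintro ⟨r, c⟩ ⟨r', c'⟩ hp hq hrow hcol
    simp only at hrow hcol
    subst hrow
    rcases hclass r c hp with ⟨hc0, hr⟩ | ⟨hr, hc⟩ | ⟨hr, h1c, h2c⟩ <;>
      rcases hclass r c' hq with ⟨hc0', hr'⟩ | ⟨hr', hc'⟩ | ⟨hr', h1c', h2c'⟩ <;>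
        try omega
    · -- p = (1,0), q = (1,1)
      subst hc0; subst hr'; subst hc'
      rw [hTA 1 (by omega), hTB]
      exact lt_of_le_of_lt (Nat.nth_le_nth_of_lt_card hCfin (by omega) (by omega)) hCnth1
    · -- p = (0,0), q = (0,c')
      subst hc0; subst hr'
      rw [hTA 0 (by omega), hCnth0, hTC c' h1c' h2c']
      exact hW2 _ (hRmem (c' - 1) (by omega)).1
    · -- both in row 0, cols ≥ 1
      subst hr
      rw [hTC c h1c h2c, hTC c' h1c' h2c']
      exact Nat.nth_lt_nth_of_lt_card hRfin (by omega) (by omega)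
  · -- columns increasing
    rintro ⟨r, c⟩ ⟨r', c'⟩ hp hq hcol hrow
    simp only at hrow hcol
    subst hcol
    rcases hclass r c hp with ⟨hc0, hr⟩ | ⟨hr, hc⟩ | ⟨hr, h1c, h2c⟩ <;>
      rcases hclass r' c hq with ⟨hc0', hr'⟩ | ⟨hr', hc'⟩ | ⟨hr', h1c', h2c'⟩ <;>
        try omega
    · -- both in column 0
      subst hc0
      rw [hTA r hr, hTA r' hr']
      exact Nat.nth_lt_nth_of_lt_card hCfin hrow (by omega)
    · -- p = (0,1), q = (1,1)
      subst hr; subst hr'; subst hc'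
      rw [hTC 1 le_rfl (by omega), hTB]
      simpa using hRnth0
end

section
/- Let n ≥ 4 and 2 ≤ j ≤ n−2, and let T be a standard Young tableau of shape (j, 2, 1^{n−j−2}) with entries 1,...,n. Let a = T(2,2) and let B be the box of T containing a−1. If B lies in the first row of T, then 1 ∈ W_T := {T(1,i) : 1 ≤ i ≤ j}, a ∉ W_T, and a is a non-minimal element of the set of minima of the connected components of C_n restricted to the complement of W_T. -/
open scoped Classical

lemma succ_mod_case {n x y : ℕ} (hn : 2 ≤ n) (hx1 : 1 ≤ x) (hx2 : x ≤ n)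
    (hy1 : 1 ≤ y) (hy2 : y ≤ n) (h : (x + 1) % n = y % n) :
    y = x + 1 ∨ (x = n ∧ y = 1) := by
  have hym : y % n = if y = n then 0 else y := by
    split
    · simp [*]
    · exact Nat.mod_eq_of_lt (by omega)
  rcases eq_or_lt_of_le hx2 with hxn | hxn
  · right
    have h1 : (x + 1) % n = 1 := by
      rw [hxn, Nat.add_mod_left]
      exact Nat.mod_eq_of_lt (by omega)
    rw [h1] at h
    constructor
    · omega
    · rw [hym] at h
      split at h <;> omega
  · rcases eq_or_lt_of_le (show x + 1 ≤ n by omega) with hx1n | hx1n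
    · have h1 : (x + 1) % n = 0 := by rw [hx1n]; simp
      rw [h1, hym] at h
      split at h <;> omega
    · have h1 : (x + 1) % n = x + 1 := Nat.mod_eq_of_lt hx1n
      rw [h1, hym] at h
      split at h <;> omega

lemma cycle_adj_cases {n x y : ℕ} (hn : 2 ≤ n) (h : (cycleGraph n).Adj x y) :
    y = x + 1 ∨ x = y + 1 ∨ (x = n ∧ y = 1) ∨ (y = n ∧ x = 1) := by
  obtain ⟨hx, hy, hne, hmod⟩ := h
  simp only [Set.mem_Icc] at hx hy
  rcases hmod with h1 | h1
  · rcases succ_mod_case hn hx.1 hx.2 hy.1 hy.2 h1 with h2 | h2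
    · exact Or.inl h2
    · exact Or.inr (Or.inr (Or.inl h2))
  · rcases succ_mod_case hn hy.1 hy.2 hx.1 hx.2 h1 with h2 | h2
    · exact Or.inr (Or.inl h2)
    · exact Or.inr (Or.inr (Or.inr h2))

/-- if the box containing `a_T - 1` lies in the first row, then
`1 ∈ W_T` (the first-row entries), `a_T ∉ W_T`, and `a_T` is a non-minimal component
minimum of `C_n` restricted to the complement of `W_T`. -/
theorem stmt_4 (n j : ℕ) (hn : 4 ≤ n) (hj1 : 2 ≤ j) (hj2 : j ≤ n - 2)
    (T : ℕ × ℕ → ℕ) (hT : IsSYT n j T)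
    (hrow : ∃ c < j, T (0, c) = T (1, 1) - 1)
    (W : Set ℕ) (hWdef : W = T '' {p : ℕ × ℕ | p.1 = 0 ∧ p.2 < j}) :
    1 ∈ W ∧ T (1, 1) ∉ W ∧
    T (1, 1) ∈ compMins n (Set.Icc 1 n \ W) ∧
    T (1, 1) ≠ sInf (compMins n (Set.Icc 1 n \ W)) := by
  obtain ⟨h0, hbij, hrowlt, hcollt⟩ := hT
  have hn2 : 2 ≤ n := by omega
  -- basic cells
  have cell00 : cell n j (0, 0) := Or.inl ⟨rfl, by omega⟩
  have cell01 : cell n j (0, 1) := Or.inl ⟨rfl, by omega⟩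
  have cell10 : cell n j (1, 0) := Or.inr (Or.inl ⟨rfl, by omega⟩)
  have cell11 : cell n j (1, 1) := Or.inr (Or.inl ⟨rfl, by omega⟩)
  have cell0c : ∀ c, c < j → cell n j (0, c) := fun c hc => Or.inl ⟨rfl, hc⟩
  have hmaps := hbij.1
  have hinj := hbij.2.1
  -- T (0,0) = 1
  have hle : ∀ p, cell n j p → T (0, 0) ≤ T p := by
    intro p hp
    rcases hp with ⟨hp1, hp2⟩ | ⟨hp1, hp2⟩ | ⟨hp1, hp2, hp3⟩
    · rcases Nat.eq_zero_or_pos p.2 with h' | h'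
      · have : p = (0, 0) := Prod.ext hp1 h'
        rw [this]
      · exact le_of_lt (hrowlt (0, 0) p cell00 (Or.inl ⟨hp1, hp2⟩) hp1.symm h')
    · have h1 : T (0, p.2) < T p := by
        have := hcollt (0, p.2) p (cell0c p.2 (by omega)) (Or.inr (Or.inl ⟨hp1, hp2⟩)) rfl
          (by omega)
        exact this
      have h2 : T (0, 0) ≤ T (0, p.2) := by
        rcases Nat.eq_zero_or_pos p.2 with h' | h'
        · rw [h']
        · exact le_of_lt (hrowlt (0, 0) (0, p.2) cell00 (cell0c p.2 (by omega)) rfl h')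
      omega
    · exact le_of_lt (hcollt (0, 0) p cell00 (Or.inr (Or.inr ⟨hp1, hp2, hp3⟩)) hp3.symm
        (by omega))
  have hT00 : T (0, 0) = 1 := by
    obtain ⟨p, hp, hTp⟩ := hbij.2.2 (show (1 : ℕ) ∈ Set.Icc 1 n by
      simp [Set.mem_Icc]; omega)
    have h1 := hle p hp
    have h2 := hmaps cell00
    simp only [Set.mem_Icc] at h2
    omega
  have h1W : 1 ∈ W := by
    rw [hWdef]
    exact ⟨(0, 0), ⟨rfl, by omega⟩, hT00⟩
  -- a = T (1,1) basic facts
  set a := T (1, 1) with ha_def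
  have haIcc : a ∈ Set.Icc 1 n := hmaps cell11
  have haW : a ∉ W := by
    rw [hWdef]
    rintro ⟨p, ⟨hp1, hp2⟩, hTp⟩
    have he : p = (1, 1) := hinj (Or.inl ⟨hp1, hp2⟩) cell11 hTp
    rw [he] at hp1
    simp at hp1
  have ha2 : 2 ≤ a := by
    have h1 := hcollt (0, 1) (1, 1) cell01 cell11 rfl (by omega)
    have h2 := hmaps cell01
    simp only [Set.mem_Icc] at h2
    omega
  have ha1W : a - 1 ∈ W := by
    obtain ⟨c, hc, hTc⟩ := hrow
    rw [hWdef]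
    exact ⟨(0, c), ⟨rfl, hc⟩, hTc⟩
  have haW' : a ∈ Set.Icc 1 n \ W := ⟨haIcc, haW⟩
  -- the step lemma
  set s : Set ℕ := Set.Icc 1 n \ W with hs_def
  have hstep : ∀ u v : ↥s, ((cycleGraph n).induce s).Adj u v → a ≤ u.1 → a ≤ v.1 := by
    rintro ⟨u, hu⟩ ⟨v, hv⟩ hadj hua
    change a ≤ u at hua
    change a ≤ v
    have hadj' : (cycleGraph n).Adj u v := hadj
    rcases cycle_adj_cases hn2 hadj' with h1 | h1 | ⟨h1, h2⟩ | ⟨h1, h2⟩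
    · omega
    · -- u = v + 1
      by_contra hva
      have hv_eq : v = a - 1 := by omega
      exact hv.2 (by rw [hv_eq]; exact ha1W)
    · exact (hv.2 (show v ∈ W by rw [h2]; exact h1W)).elim
    · omega
  have hreach : ∀ u v : ↥s, ((cycleGraph n).induce s).Reachable u v → a ≤ u.1 → a ≤ v.1 := by
    intro u v huv
    obtain ⟨w⟩ := huv
    induction w with
    | nil => exact id
    | cons hadj p ih => exact fun hu => ih (hstep _ _ hadj hu)
  have haMin : a ∈ compMins n s := by
    refine ⟨haW', fun b hb hr => ?_⟩
    exact hreach _ _ hr le_rfl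
  -- non-minimality via the component of t = T (1, 0)
  have htIcc : T (1, 0) ∈ Set.Icc 1 n := hmaps cell10
  have htW : T (1, 0) ∉ W := by
    rw [hWdef]
    rintro ⟨p, ⟨hp1, hp2⟩, hTp⟩
    have he : p = (1, 0) := hinj (Or.inl ⟨hp1, hp2⟩) cell10 hTp
    rw [he] at hp1
    simp at hp1
  have hts : T (1, 0) ∈ s := ⟨htIcc, htW⟩
  have hta : T (1, 0) < a := hrowlt (1, 0) (1, 1) cell10 cell11 rfl (by omega)
  set C : Set ℕ := {b | ∃ hb : b ∈ s,
    ((cycleGraph n).induce s).Reachable ⟨T (1, 0), hts⟩ ⟨b, hb⟩} with hC_def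
  have htC : T (1, 0) ∈ C := ⟨hts, SimpleGraph.Reachable.refl _⟩
  have hmC : sInf C ∈ C := Nat.sInf_mem ⟨_, htC⟩
  obtain ⟨hmss, hreachm⟩ := hmC
  have hmem : sInf C ∈ compMins n s := by
    refine ⟨hmss, fun b hb hr => ?_⟩
    exact Nat.sInf_le ⟨hb, hreachm.trans hr⟩
  have hCle : sInf C ≤ T (1, 0) := Nat.sInf_le htC
  have hInfle : sInf (compMins n s) ≤ sInf C := Nat.sInf_le hmem
  exact ⟨h1W, haW, haMin, by omega⟩
end

section
/- Let n ≥ 4 and 2 ≤ j ≤ n−2, and let T be a standard Young tableau of shape (j, 2, 1^{n−j−2}). Let a = T(2,2) and let B be the box containing a−1. If B lies in the first column of T, then with W_T := {T(2,2)} ∪ {T(1,i) : 2 ≤ i ≤ j}, we have 1 ∉ W_T, a ∈ W_T, and a is a non-minimal element of the set of minima of the connected components of C_n[W_T]. -/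
open scoped Classical

lemma adj_cases {n x y : ℕ} (hn : 2 ≤ n) (h : (cycleGraph n).Adj x y) :
    y = x + 1 ∨ x = y + 1 ∨ (x = n ∧ y = 1) ∨ (x = 1 ∧ y = n) := by
  obtain ⟨hx, hy, hne, hmod⟩ := h
  simp only [Set.mem_Icc] at hx hy
  have key : ∀ i k : ℕ, 1 ≤ i → i ≤ n → 1 ≤ k → k ≤ n → (i + 1) % n = k % n →
      k = i + 1 ∨ (i = n ∧ k = 1) := by
    intro i k hi1 hi2 hk1 hk2 h
    rcases eq_or_lt_of_le hi2 with rfl | hilt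
    · have h1 : (i + 1) % i = 1 := by
        rw [Nat.add_mod_left]
        exact Nat.mod_eq_of_lt (by omega)
      rw [h1] at h
      rcases eq_or_lt_of_le hk2 with rfl | hklt
      · rw [Nat.mod_self] at h; omega
      · rw [Nat.mod_eq_of_lt hklt] at h; omega
    · have hi1n : i + 1 ≤ n := hilt
      rcases eq_or_lt_of_le hi1n with heq | hlt
      · rw [heq, Nat.mod_self] at h
        rcases eq_or_lt_of_le hk2 with rfl | hklt
        · omega
        · rw [Nat.mod_eq_of_lt hklt] at h; omega
      · rw [Nat.mod_eq_of_lt hlt] at h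
        rcases eq_or_lt_of_le hk2 with rfl | hklt
        · rw [Nat.mod_self] at h; omega
        · rw [Nat.mod_eq_of_lt hklt] at h; omega
  rcases hmod with h | h
  · rcases key x y hx.1 hx.2 hy.1 hy.2 h with h' | h'
    · exact Or.inl h'
    · exact Or.inr (Or.inr (Or.inl h'))
  · rcases key y x hy.1 hy.2 hx.1 hx.2 h with h' | h'
    · exact Or.inr (Or.inl h')
    · exact Or.inr (Or.inr (Or.inr ⟨h'.2, h'.1⟩))

/-- if the box containing `a_T - 1` lies in the first column, then with
`W_T = {T(2,2)} ∪ {T(1,i) : 2 ≤ i ≤ j}` we have `1 ∉ W_T`, `a_T ∈ W_T`, and `a_T`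
is a non-minimal component minimum of `C_n[W_T]`. -/
theorem stmt_5 (n j : ℕ) (hn : 4 ≤ n) (hj1 : 2 ≤ j) (hj2 : j ≤ n - 2)
    (T : ℕ × ℕ → ℕ) (hT : IsSYT n j T)
    (hcol : ∃ r < n - j, T (r, 0) = T (1, 1) - 1)
    (W : Set ℕ)
    (hWdef : W = {T (1, 1)} ∪ T '' {p : ℕ × ℕ | p.1 = 0 ∧ 1 ≤ p.2 ∧ p.2 < j}) :
    1 ∉ W ∧ T (1, 1) ∈ W ∧
    T (1, 1) ∈ compMins n W ∧ T (1, 1) ≠ sInf (compMins n W) := by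
  obtain ⟨h0, hbij, hrow, hcolinc⟩ := hT
  set a := T (1, 1) with ha_def
  have hn2 : 2 ≤ n := by omega
  -- basic cells
  have cell00 : cell n j (0, 0) := Or.inl ⟨rfl, by omega⟩
  have cell01 : cell n j (0, 1) := Or.inl ⟨rfl, by omega⟩
  have cell11 : cell n j (1, 1) := Or.inr (Or.inl ⟨rfl, by omega⟩)
  have cell0c : ∀ c, c < j → cell n j (0, c) := fun c hc => Or.inl ⟨rfl, hc⟩
  have cellr0 : ∀ r, r < n - j → cell n j (r, 0) := by
    intro r hr
    rcases Nat.lt_or_ge r 2 with h | h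
    · interval_cases r
      · exact Or.inl ⟨rfl, by omega⟩
      · exact Or.inr (Or.inl ⟨rfl, by omega⟩)
    · exact Or.inr (Or.inr ⟨h, hr, rfl⟩)
  have hmem : ∀ p, cell n j p → T p ∈ Set.Icc 1 n := fun p hp => hbij.mapsTo hp
  have inj := hbij.injOn
  -- T(0,0) ≥ 1, T(0,1) > T(0,0), a > T(0,1)
  have h00 := hmem _ cell00
  have h01lt : T (0, 0) < T (0, 1) := hrow (0, 0) (0, 1) cell00 cell01 rfl (by norm_num)
  have ha01 : T (0, 1) < a := hcolinc (0, 1) (1, 1) cell01 cell11 rfl (by norm_num)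
  have hrowmono : ∀ c c', c < j → c' < j → c < c' → T (0, c) < T (0, c') := by
    intro c c' hc hc' hlt
    exact hrow (0, c) (0, c') (cell0c c hc) (cell0c c' hc') rfl hlt
  -- elements of W
  have hW_elim : ∀ x ∈ W, x = a ∨ ∃ c, 1 ≤ c ∧ c < j ∧ T (0, c) = x := by
    intro x hx
    rw [hWdef] at hx
    rcases hx with hx | ⟨⟨p1, p2⟩, ⟨hp1, hp2, hp3⟩, hpe⟩
    · exact Or.inl hx
    · refine Or.inr ⟨p2, hp2, hp3, ?_⟩
      simp only at hp1; subst hp1; exact hpe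
  have hW_gt1 : ∀ x ∈ W, 1 < x := by
    intro x hx
    rcases hW_elim x hx with rfl | ⟨c, hc1, hc2, rfl⟩
    · have := h00.1; omega
    · have := hrowmono 0 c (by omega) hc2 hc1
      have := h00.1; omega
  have hW_sub : W ⊆ Set.Icc 1 n := by
    intro x hx
    rcases hW_elim x hx with rfl | ⟨c, hc1, hc2, rfl⟩
    · exact hmem _ cell11
    · exact hmem _ (cell0c c hc2)
  have h1W : (1 : ℕ) ∉ W := fun h => by have := hW_gt1 1 h; omega
  have haW : a ∈ W := by rw [hWdef]; exact Or.inl rfl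
  have ha1 : 1 ≤ a := (hmem _ cell11).1
  have han : a ≤ n := (hmem _ cell11).2
  -- a - 1 ∉ W
  obtain ⟨r, hr, hreq⟩ := hcol
  have ham1 : a - 1 ∉ W := by
    intro h
    rcases hW_elim _ h with he | ⟨c, hc1, hc2, he⟩
    · have := h00.1
      have := hrowmono 0 1 (by omega) (by omega) (by omega)
      omega
    · rw [← hreq] at he
      have := inj (cellr0 r hr) (cell0c c hc2) he.symm
      simp only [Prod.mk.injEq] at this
      omega
  -- closure of {x ∈ W | a ≤ x} under adjacency
  have closure : ∀ x ∈ W, ∀ y ∈ W, (cycleGraph n).Adj x y → a ≤ x → a ≤ y := by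
    intro x hx y hy hadj hax
    rcases adj_cases hn2 hadj with h | h | ⟨h1, h2⟩ | ⟨h1, h2⟩
    · omega
    · rcases Nat.lt_or_ge y a with hlt | hge
      · exfalso; apply ham1; have : y = a - 1 := by omega
        rwa [this] at hy
      · exact hge
    · exfalso; exact h1W (h2 ▸ hy)
    · exact h2 ▸ hW_sub hx |>.2 |> fun _ => h2 ▸ han
  -- reachability preserves a ≤ ·
  have reach_ge : ∀ (u v : {x // x ∈ W}), ((cycleGraph n).induce W).Walk u v →
      a ≤ (u : ℕ) → a ≤ (v : ℕ) := by
    intro u v p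
    induction p with
    | nil => exact id
    | cons h p ih =>
      intro hu
      rename_i u' w' _
      have hadj : (cycleGraph n).Adj (u' : ℕ) (w' : ℕ) := h
      exact ih (closure _ u'.2 _ w'.2 hadj hu)
  have hacm : a ∈ compMins n W := by
    refine ⟨haW, fun b hb hr => ?_⟩
    obtain ⟨p⟩ := hr
    exact reach_ge _ _ p le_rfl
  refine ⟨h1W, haW, hacm, ?_⟩
  -- T(0,1) is a smaller component minimum
  have hmW : T (0, 1) ∈ W := by
    rw [hWdef]; exact Or.inr ⟨(0, 1), ⟨rfl, le_refl 1, by omega⟩, rfl⟩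
  have hm_le : ∀ x ∈ W, T (0, 1) ≤ x := by
    intro x hx
    rcases hW_elim x hx with rfl | ⟨c, hc1, hc2, rfl⟩
    · omega
    · rcases Nat.lt_or_ge 1 c with h | h
      · exact le_of_lt (hrowmono 1 c (by omega) hc2 h)
      · have : c = 1 := by omega
        subst this; exact le_rfl
  have hmcm : T (0, 1) ∈ compMins n W :=
    ⟨hmW, fun b hb _ => hm_le b hb⟩
  have hsinf : sInf (compMins n W) ≤ T (0, 1) := Nat.sInf_le hmcm
  omega
end

section
/- Let n ≥ 4 and let W be a proper nonempty subset of {1,...,n} with 1 ∈ W, and suppose the second-smallest element b of W satisfies b > 2. Then {2, 3, ..., b−1} is the vertex set of a connected component of C_n restricted to the complement of W, and min(m(W)) = 2, where m(W) is the set of minima of connected components of C_n[complement of W]. -/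
open scoped Classical

/-- if `1 ∈ W` and the second-smallest element `b` of `W` satisfies
`b > 2`, then `{2,...,b-1}` is the vertex set of a connected component of
`C_n[complement of W]`, and `min(m(W)) = 2`. -/
theorem stmt_6 (n : ℕ) (hn : 4 ≤ n) (W : Set ℕ) (hW : W ⊆ Set.Icc 1 n)
    (hpr : W ≠ Set.Icc 1 n) (h1 : 1 ∈ W) (hne : (W \ {1}).Nonempty)
    (b : ℕ) (hb : b = sInf (W \ {1})) (hb2 : 2 < b) :
    (∃ h2 : (2 : ℕ) ∈ Set.Icc 1 n \ W,
      ∀ x, ∀ hx : x ∈ Set.Icc 1 n \ W,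
        (((cycleGraph n).induce (Set.Icc 1 n \ W)).Reachable ⟨2, h2⟩ ⟨x, hx⟩ ↔
          x ∈ Set.Icc 2 (b - 1))) ∧
    sInf (compMins n (Set.Icc 1 n \ W)) = 2 := by
  have hbW : b ∈ W \ {1} := by rw [hb]; exact Nat.sInf_mem hne
  have hbn : b ≤ n := (hW hbW.1).2
  have hUmem : ∀ x, 2 ≤ x → x ≤ b - 1 → x ∈ Set.Icc 1 n \ W := by
    intro x hx1 hx2
    refine ⟨⟨by omega, by omega⟩, fun hxW => ?_⟩
    have hx1' : x ∈ W \ {1} := ⟨hxW, by simp; omega⟩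
    have : b ≤ x := hb ▸ Nat.sInf_le hx1'
    omega
  have h2 : (2 : ℕ) ∈ Set.Icc 1 n \ W := hUmem 2 le_rfl (by omega)
  have adj_char : ∀ x y, 2 ≤ x → x ≤ n - 1 → (cycleGraph n).Adj x y →
      y = x - 1 ∨ y = x + 1 := by
    intro x y hx1 hx2 h
    obtain ⟨hxI, hyI, hne', hd⟩ := h
    simp only [Set.mem_Icc] at hxI hyI
    have hxm : x % n = x := Nat.mod_eq_of_lt (by omega)
    have hym : y % n = y ∨ (y = n ∧ y % n = 0) := by
      rcases lt_or_eq_of_le hyI.2 with h' | h'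
      · exact Or.inl (Nat.mod_eq_of_lt h')
      · exact Or.inr ⟨h', by rw [h']; exact Nat.mod_self n⟩
    have hx1m : (x + 1) % n = x + 1 ∨ (x + 1 = n ∧ (x + 1) % n = 0) := by
      rcases lt_or_eq_of_le (show x + 1 ≤ n by omega) with h' | h'
      · exact Or.inl (Nat.mod_eq_of_lt h')
      · exact Or.inr ⟨h', by rw [h']; exact Nat.mod_self n⟩
    have hy1m : (y + 1) % n = y + 1 ∨ (y + 1 = n ∧ (y + 1) % n = 0) ∨
        (y = n ∧ (y + 1) % n = 1) := by
      rcases Nat.lt_trichotomy (y + 1) n with h' | h' | h'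
      · exact Or.inl (Nat.mod_eq_of_lt h')
      · exact Or.inr (Or.inl ⟨h', by rw [h']; exact Nat.mod_self n⟩)
      · have hyn : y = n := by omega
        refine Or.inr (Or.inr ⟨hyn, ?_⟩)
        rw [hyn, Nat.add_mod_left]
        exact Nat.mod_eq_of_lt (by omega)
    rcases hd with hd | hd <;> rcases hym with hym | hym <;>
      rcases hx1m with hx1m | hx1m <;> rcases hy1m with hy1m | hy1m | hy1m <;>
      omega
  have closure : ∀ x y, x ∈ Set.Icc 2 (b - 1) → y ∈ Set.Icc 1 n \ W →
      (cycleGraph n).Adj x y → y ∈ Set.Icc 2 (b - 1) := by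
    intro x y hx hy hadj
    simp only [Set.mem_Icc] at hx ⊢
    have hy1 : y ≠ 1 := by rintro rfl; exact hy.2 h1
    have hyb : y ≠ b := by rintro rfl; exact hy.2 hbW.1
    have hy1n := hy.1
    simp only [Set.mem_Icc] at hy1n
    rcases adj_char x y hx.1 (by omega) hadj with h' | h' <;> omega
  have step : ∀ x y (hx : x ∈ Set.Icc 1 n \ W) (hy : y ∈ Set.Icc 1 n \ W),
      y + 1 = x → ((cycleGraph n).induce (Set.Icc 1 n \ W)).Adj ⟨y, hy⟩ ⟨x, hx⟩ := by
    intro x y hx hy hxy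
    show (cycleGraph n).Adj y x
    exact ⟨hy.1, hx.1, by omega, Or.inl (by rw [hxy])⟩
  have reach : ∀ x, ∀ hx : x ∈ Set.Icc 1 n \ W, 2 ≤ x → x ≤ b - 1 →
      ((cycleGraph n).induce (Set.Icc 1 n \ W)).Reachable ⟨2, h2⟩ ⟨x, hx⟩ := by
    intro x
    induction x using Nat.strong_induction_on with
    | _ x ih =>
      intro hx h2x hxb
      rcases eq_or_lt_of_le h2x with h' | hlt
      · subst h'; exact SimpleGraph.Reachable.refl _
      · have hx' := hUmem (x - 1) (by omega) (by omega)
        have h0 := ih (x - 1) (by omega) hx' (by omega) (by omega)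
        exact h0.trans (step x (x - 1) hx hx' (by omega)).reachable
  have walk_mem : ∀ (u v : ↥(Set.Icc 1 n \ W))
      (p : ((cycleGraph n).induce (Set.Icc 1 n \ W)).Walk u v),
      (u : ℕ) ∈ Set.Icc 2 (b - 1) → (v : ℕ) ∈ Set.Icc 2 (b - 1) := by
    intro u v p
    induction p with
    | nil => exact id
    | cons h p ih =>
      intro hu
      exact ih (closure _ _ hu (Subtype.mem _) h)
  have main : ∀ x, ∀ hx : x ∈ Set.Icc 1 n \ W,
      (((cycleGraph n).induce (Set.Icc 1 n \ W)).Reachable ⟨2, h2⟩ ⟨x, hx⟩ ↔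
        x ∈ Set.Icc 2 (b - 1)) := by
    intro x hx
    constructor
    · intro hr
      obtain ⟨p⟩ := hr
      exact walk_mem _ _ p (by simp only [Set.mem_Icc]; omega)
    · intro hxI
      simp only [Set.mem_Icc] at hxI
      exact reach x hx hxI.1 hxI.2
  refine ⟨⟨h2, main⟩, ?_⟩
  have h2m : 2 ∈ compMins n (Set.Icc 1 n \ W) :=
    ⟨h2, fun y hy hr => (Set.mem_Icc.mp ((main y hy).1 hr)).1⟩
  apply le_antisymm
  · exact Nat.sInf_le h2m
  · apply le_csInf ⟨2, h2m⟩
    intro a ha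
    obtain ⟨haU, -⟩ := ha
    have h1n := haU.1
    simp only [Set.mem_Icc] at h1n
    have ha1 : a ≠ 1 := by rintro rfl; exact haU.2 h1
    omega
end

section
/- For n ≥ 4 and 2 ≤ j ≤ n−2, the map (W, a) ↦ (complement of W, a) is a bijection from the set S(j,n) of pairs (W, a) with W a j-element subset of {1,...,n} and a a non-minimal element of m(W), to the analogous set S(n−j, n). -/
open scoped Classical

lemma mSet_compl_aux (n : ℕ) (hn : 1 ≤ n) (W : Set ℕ) (hW : W ⊆ Set.Icc 1 n) :
    mSet n (Set.Icc 1 n \ W) = mSet n W := by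
  unfold mSet
  by_cases h1 : 1 ∈ W
  · rw [if_pos h1, if_neg (fun h => h.2 h1)]
  · have h1' : (1 : ℕ) ∈ Set.Icc 1 n \ W := ⟨⟨le_refl 1, hn⟩, h1⟩
    rw [if_pos h1', if_neg h1, Set.diff_diff_cancel_left hW]

lemma mapsTo_aux (n k : ℕ) (hn : 1 ≤ n) (hk : k ≤ n) :
    Set.MapsTo (fun p : Set ℕ × ℕ => (Set.Icc 1 n \ p.1, p.2))
      (SpairSet n k) (SpairSet n (n - k)) := by
  rintro ⟨W, a⟩ ⟨hsub, hcard, hmem, hne⟩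
  have hfin : (Set.Icc 1 n).Finite := Set.finite_Icc 1 n
  have hIcc : (Set.Icc 1 n).ncard = n := by
    rw [Set.ncard_eq_toFinset_card', Set.toFinset_Icc, Nat.card_Icc]; omega
  have hm := mSet_compl_aux n hn W hsub
  exact ⟨Set.diff_subset, by
      rw [Set.ncard_diff hsub (hfin.subset hsub), hIcc, hcard], by rw [hm]; exact hmem,
    by rw [hm]; exact hne⟩

/-- `(W, a) ↦ (complement of W, a)` is a bijection from `S(j,n)` to
`S(n-j,n)`. -/
theorem stmt_9 (n j : ℕ) (hn : 4 ≤ n) (hj1 : 2 ≤ j) (hj2 : j ≤ n - 2) :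
    Set.BijOn (fun p : Set ℕ × ℕ => (Set.Icc 1 n \ p.1, p.2))
      (SpairSet n j) (SpairSet n (n - j)) := by
  have hn1 : 1 ≤ n := by omega
  have hjn : j ≤ n := by omega
  refine ⟨mapsTo_aux n j hn1 hjn, ?_, ?_⟩
  · rintro ⟨W, a⟩ hp ⟨V, b⟩ hq h
    simp only [Prod.mk.injEq] at h
    have hW : W = V := by
      have : Set.Icc 1 n \ (Set.Icc 1 n \ W) = Set.Icc 1 n \ (Set.Icc 1 n \ V) := by
        rw [h.1]
      rwa [Set.diff_diff_cancel_left hp.1, Set.diff_diff_cancel_left hq.1] at this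
    exact Prod.ext hW h.2
  · rintro ⟨W, a⟩ hq
    refine ⟨(Set.Icc 1 n \ W, a), ?_, ?_⟩
    · have := mapsTo_aux n (n - j) hn1 (Nat.sub_le n j) hq
      simpa [Nat.sub_sub_self hjn] using this
    · simp [Set.diff_diff_cancel_left hq.1]
end

section
/- For n ≥ 4 and 2 ≤ j ≤ n−2, and any standard Young tableau T of shape (j, 2, 1^{n−j−2}), the bijection φ of the paper satisfies φ(T*) = (complement of W_T, a_T), where T* is the transpose of T; i.e., W_{T*} equals the complement of W_T and a_{T*} = a_T. -/
open scoped Classical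

/-- `φ(T*) = (complement of W_T, a_T)` for the transpose `T*` of `T`. -/
theorem stmt_10 (n j : ℕ) (hn : 4 ≤ n) (hj1 : 2 ≤ j) (hj2 : j ≤ n - 2)
    (T : ℕ × ℕ → ℕ) (hT : IsSYT n j T) :
    WT (n - j) (T ∘ Prod.swap) = Set.Icc 1 n \ WT j T ∧
    aT (T ∘ Prod.swap) = aT T := by
  obtain ⟨h0, hb, hr, hc⟩ := hT
  have hnj : 2 ≤ n - j := by omega
  have c00 : cell n j (0,0) := Or.inl ⟨rfl, by omega⟩
  have c01 : cell n j (0,1) := Or.inl ⟨rfl, by omega⟩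
  have c11 : cell n j (1,1) := Or.inr (Or.inl ⟨rfl, by norm_num⟩)
  have hrowcell : ∀ c, c < j → cell n j (0, c) := fun c hcj => Or.inl ⟨rfl, hcj⟩
  have hcolcell : ∀ r, r < n - j → cell n j (r, 0) := by
    intro r hrlt
    rcases Nat.lt_or_ge r 2 with h2 | h2
    · interval_cases r
      · exact Or.inl ⟨rfl, by omega⟩
      · exact Or.inr (Or.inl ⟨rfl, by norm_num⟩)
    · exact Or.inr (Or.inr ⟨h2, hrlt, rfl⟩)
  have h1 : T (0,0) < T (0,1) := hr (0,0) (0,1) c00 c01 rfl (by norm_num)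
  have h2 : T (0,1) < T (1,1) := hc (0,1) (1,1) c01 c11 rfl (by norm_num)
  have h00 : 1 ≤ T (0,0) := (hb.mapsTo c00).1
  have hamem : T (1,1) ∈ Set.Icc 1 n := hb.mapsTo c11
  have han : T (1,1) ≤ n := hamem.2
  have ham1 : T (1,1) - 1 ∈ Set.Icc 1 n := ⟨by omega, by omega⟩
  obtain ⟨p, hp, hTp⟩ := hb.surjOn ham1
  have hnotboth : ¬ ((∃ c < j, T (0, c) = T (1,1) - 1) ∧
      (∃ c < n - j, T (c, 0) = T (1,1) - 1)) := by
    rintro ⟨⟨c, hcj, hce⟩, ⟨r, hrn, hre⟩⟩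
    have heq : ((0 : ℕ), c) = (r, (0 : ℕ)) :=
      hb.injOn (hrowcell c hcj) (hcolcell r hrn) (hce.trans hre.symm)
    have hc0 : c = 0 := congrArg Prod.snd heq
    rw [hc0] at hce
    omega
  have hdich : (∃ c < j, T (0, c) = T (1,1) - 1) ∨
      (∃ c < n - j, T (c, 0) = T (1,1) - 1) := by
    obtain ⟨x, y⟩ := p
    rcases hp with ⟨hx, hy⟩ | ⟨hx, hy⟩ | ⟨hx2, hxn, hy0⟩
    · simp only at hx hy; subst hx; exact Or.inl ⟨y, hy, hTp⟩
    · simp only at hx hy; subst hx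
      interval_cases y
      · exact Or.inr ⟨1, by omega, hTp⟩
      · omega
    · simp only at hx2 hxn hy0; subst hy0; exact Or.inr ⟨x, hxn, hTp⟩
  have hswap : ∀ (P : ℕ → ℕ → Prop),
      Prod.swap '' {p : ℕ × ℕ | P p.1 p.2} = {p : ℕ × ℕ | P p.2 p.1} := by
    intro P
    ext ⟨x, y⟩
    constructor
    · rintro ⟨⟨u, v⟩, h, heq⟩
      rw [Prod.swap_prod_mk] at heq
      injection heq with e1 e2
      subst e1; subst e2
      exact h
    · intro h; exact ⟨(y, x), h, rfl⟩
  refine ⟨?_, rfl⟩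
  rcases hdich with hRow | hCol
  · have hnotCol : ¬ ∃ c < n - j,
        (T ∘ Prod.swap) (0, c) = (T ∘ Prod.swap) (1, 1) - 1 := by
      intro hcond
      exact hnotboth ⟨hRow, hcond⟩
    have hLHS : WT (n - j) (T ∘ Prod.swap) =
        {T (1,1)} ∪ T '' {q : ℕ × ℕ | q.2 = 0 ∧ 1 ≤ q.1 ∧ q.1 < n - j} := by
      rw [WT, if_neg hnotCol]
      congr 1
      rw [Set.image_comp, hswap (fun x y => x = 0 ∧ 1 ≤ y ∧ y < n - j)]
    have hRT : WT j T = T '' {q : ℕ × ℕ | q.1 = 0 ∧ q.2 < j} := by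
      rw [WT, if_pos hRow]
    rw [hLHS, hRT]
    ext x
    simp only [Set.mem_union, Set.mem_singleton_iff, Set.mem_image, Set.mem_diff,
      Set.mem_setOf_eq]
    constructor
    · rintro (rfl | ⟨⟨u, v⟩, ⟨hv0, h1u, hun⟩, rfl⟩)
      · refine ⟨hamem, ?_⟩
        rintro ⟨⟨s, t⟩, ⟨hs, ht⟩, heq⟩
        simp only at hs ht
        have h' := hb.injOn (by subst hs; exact hrowcell t ht) c11 heq
        have : s = 1 := congrArg Prod.fst h'
        omega
      · simp only at hv0 h1u hun
        subst hv0
        refine ⟨hb.mapsTo (hcolcell u hun), ?_⟩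
        rintro ⟨⟨s, t⟩, ⟨hs, ht⟩, heq⟩
        simp only at hs ht
        have h' := hb.injOn (by subst hs; exact hrowcell t ht) (hcolcell u hun) heq
        have : s = u := congrArg Prod.fst h'
        omega
    · rintro ⟨hx, hnR⟩
      obtain ⟨⟨s, t⟩, hq, rfl⟩ := hb.surjOn hx
      rcases hq with ⟨hs, ht⟩ | ⟨hs, ht⟩ | ⟨hs2, hsn, ht0⟩
      · exact absurd ⟨(s, t), ⟨hs, ht⟩, rfl⟩ hnR
      · simp only at hs ht
        subst hs
        interval_cases t
        · exact Or.inr ⟨(1, 0), ⟨rfl, le_refl 1, by omega⟩, rfl⟩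
        · exact Or.inl rfl
      · simp only at hs2 hsn ht0
        subst ht0
        exact Or.inr ⟨(s, 0), ⟨rfl, by omega, hsn⟩, rfl⟩
  · have hnotRow : ¬ ∃ c < j, T (0, c) = T (1,1) - 1 := by
      intro hcond
      exact hnotboth ⟨hcond, hCol⟩
    have hCol' : ∃ c < n - j,
        (T ∘ Prod.swap) (0, c) = (T ∘ Prod.swap) (1, 1) - 1 := hCol
    have hLHS : WT (n - j) (T ∘ Prod.swap) =
        T '' {q : ℕ × ℕ | q.2 = 0 ∧ q.1 < n - j} := by
      rw [WT, if_pos hCol']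
      rw [Set.image_comp, hswap (fun x y => x = 0 ∧ y < n - j)]
    have hRT : WT j T =
        {T (1,1)} ∪ T '' {q : ℕ × ℕ | q.1 = 0 ∧ 1 ≤ q.2 ∧ q.2 < j} := by
      rw [WT, if_neg hnotRow]
    rw [hLHS, hRT]
    ext x
    simp only [Set.mem_union, Set.mem_singleton_iff, Set.mem_image, Set.mem_diff,
      Set.mem_setOf_eq, not_or]
    constructor
    · rintro ⟨⟨u, v⟩, ⟨hv0, hun⟩, rfl⟩
      simp only at hv0 hun
      subst hv0
      refine ⟨hb.mapsTo (hcolcell u hun), ?_, ?_⟩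
      · intro heq
        have h' := hb.injOn (hcolcell u hun) c11 heq
        have : (0 : ℕ) = 1 := congrArg Prod.snd h'
        omega
      · rintro ⟨⟨s, t⟩, ⟨hs, h1t, ht⟩, heq⟩
        simp only at hs h1t ht
        have h' := hb.injOn (by subst hs; exact hrowcell t ht) (hcolcell u hun) heq
        have : t = 0 := congrArg Prod.snd h'
        omega
    · rintro ⟨hx, hne, hnR⟩
      obtain ⟨⟨s, t⟩, hq, rfl⟩ := hb.surjOn hx
      rcases hq with ⟨hs, ht⟩ | ⟨hs, ht⟩ | ⟨hs2, hsn, ht0⟩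
      · simp only at hs ht
        subst hs
        rcases Nat.eq_zero_or_pos t with rfl | htpos
        · exact ⟨(0, 0), ⟨rfl, by omega⟩, rfl⟩
        · exact absurd ⟨(0, t), ⟨rfl, htpos, ht⟩, rfl⟩ hnR
      · simp only at hs ht
        subst hs
        interval_cases t
        · exact ⟨(1, 0), ⟨rfl, by omega⟩, rfl⟩
        · exact absurd rfl hne
      · simp only at hs2 hsn ht0
        subst ht0
        exact ⟨(s, 0), ⟨rfl, hsn⟩, rfl⟩
end

section
/- For n ≥ 4 and 2 ≤ j ≤ n−2, the map φ sending a standard Young tableau T of shape (j, 2, 1^{n−j−2}) to the pair (W_T, a_T) — where a_T = T(2,2) and W_T is the set of first-row entries of T if a_T − 1 lies in the first row, and is {T(2,2)} ∪ {T(1,i) : 2 ≤ i ≤ j} if a_T − 1 lies in the first column — is injective. -/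
open scoped Classical

section Aux19

lemma syt19_cell_row {n j c : ℕ} (hc : c < j) : cell n j (0, c) := Or.inl ⟨rfl, hc⟩

lemma syt19_cell_11 {n j : ℕ} : cell n j (1, 1) := Or.inr (Or.inl ⟨rfl, one_lt_two⟩)

lemma syt19_cell_col {n j i : ℕ} (h1 : 1 ≤ i) (h2 : i < n - j) : cell n j (i, 0) := by
  rcases eq_or_lt_of_le h1 with h | h
  · exact Or.inr (Or.inl ⟨h.symm, by norm_num⟩)
  · exact Or.inr (Or.inr ⟨h, h2, rfl⟩)

lemma syt19_notin_row {n j : ℕ} {T : ℕ × ℕ → ℕ} (hT : IsSYT n j T) {c : ℕ} (hc : c < j) :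
    T (0, c) ≠ T (1, 1) := by
  intro h
  have := hT.2.1.2.1 (syt19_cell_row hc) (syt19_cell_11) h
  simp at this

lemma syt19_T00 {n j : ℕ} {T : ℕ × ℕ → ℕ} (hn : 4 ≤ n) (hj1 : 2 ≤ j) (hj2 : j ≤ n - 2)
    (hT : IsSYT n j T) : T (0, 0) = 1 := by
  have h1 : (1 : ℕ) ∈ Set.Icc 1 n := ⟨le_refl 1, by omega⟩
  obtain ⟨p, hp, hTp⟩ := hT.2.1.2.2 h1
  obtain ⟨p1, p2⟩ := p
  have hge : ∀ q, cell n j q → 1 ≤ T q := fun q hq => (hT.2.1.1 hq).1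
  have hp' : cell n j (p1, p2) := hp
  rcases hp' with ⟨h0, hlt⟩ | ⟨h1', hlt⟩ | ⟨h2', hlt, h0⟩
  · have h0' : p1 = 0 := h0
    have hlt' : p2 < j := hlt
    subst h0'
    rcases Nat.eq_zero_or_pos p2 with h | h
    · subst h; exact hTp
    · exfalso
      have hlt2 := hT.2.2.1 (0, p2 - 1) (0, p2) (syt19_cell_row (by omega))
        (syt19_cell_row hlt') rfl (by simp; omega)
      have := hge (0, p2 - 1) (syt19_cell_row (by omega))
      omega
  · exfalso
    have h1'' : p1 = 1 := h1'
    have hlt' : p2 < 2 := hlt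
    subst h1''
    have hlt2 := hT.2.2.2 (0, p2) (1, p2) (syt19_cell_row (by omega))
      (Or.inr (Or.inl ⟨rfl, hlt'⟩)) rfl (by norm_num)
    have := hge (0, p2) (syt19_cell_row (by omega))
    omega
  · exfalso
    have h2'' : 2 ≤ p1 := h2'
    have hlt' : p1 < n - j := hlt
    have h0' : p2 = 0 := h0
    subst h0'
    have hlt2 := hT.2.2.2 (p1 - 1, 0) (p1, 0) (syt19_cell_col (by omega) (by omega))
      (syt19_cell_col (by omega) hlt') rfl (by simp; omega)
    have := hge (p1 - 1, 0) (syt19_cell_col (by omega) (by omega))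
    omega

lemma syt19_mem_row_iff {j : ℕ} {T : ℕ × ℕ → ℕ} {x : ℕ} :
    x ∈ T '' {p : ℕ × ℕ | p.1 = 0 ∧ p.2 < j} ↔ ∃ c < j, T (0, c) = x := by
  constructor
  · rintro ⟨⟨p1, p2⟩, ⟨h0, hlt⟩, rfl⟩
    have h0' : p1 = 0 := h0
    subst h0'
    exact ⟨p2, hlt, rfl⟩
  · rintro ⟨c, hc, rfl⟩
    exact ⟨(0, c), ⟨rfl, hc⟩, rfl⟩

lemma syt19_mem_S_iff {j : ℕ} {T : ℕ × ℕ → ℕ} {x : ℕ} :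
    x ∈ T '' {p : ℕ × ℕ | p.1 = 0 ∧ 1 ≤ p.2 ∧ p.2 < j} ↔
      ∃ c, 1 ≤ c ∧ c < j ∧ T (0, c) = x := by
  constructor
  · rintro ⟨⟨p1, p2⟩, ⟨h0, h1, hlt⟩, rfl⟩
    have h0' : p1 = 0 := h0
    subst h0'
    exact ⟨p2, h1, hlt, rfl⟩
  · rintro ⟨c, h1, hc, rfl⟩
    exact ⟨(0, c), ⟨rfl, h1, hc⟩, rfl⟩

lemma syt19_row_iff_case2 {n j : ℕ} {T : ℕ × ℕ → ℕ} (hn : 4 ≤ n) (hj1 : 2 ≤ j)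
    (hj2 : j ≤ n - 2) (hT : IsSYT n j T) (x : ℕ) :
    (∃ c < j, T (0, c) = x) ↔
      (x = 1 ∨ x ∈ T '' {p : ℕ × ℕ | p.1 = 0 ∧ 1 ≤ p.2 ∧ p.2 < j}) := by
  constructor
  · rintro ⟨c, hc, rfl⟩
    rcases Nat.eq_zero_or_pos c with h | h
    · subst h; exact Or.inl (syt19_T00 hn hj1 hj2 hT)
    · exact Or.inr (syt19_mem_S_iff.mpr ⟨c, h, hc, rfl⟩)
  · rintro (rfl | hx)
    · exact ⟨0, by omega, syt19_T00 hn hj1 hj2 hT⟩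
    · obtain ⟨c, h1, hc, he⟩ := syt19_mem_S_iff.mp hx
      exact ⟨c, hc, he⟩

lemma syt19_col_char {n j : ℕ} {T : ℕ × ℕ → ℕ} (hn : 4 ≤ n) (hj1 : 2 ≤ j)
    (hj2 : j ≤ n - 2) (hT : IsSYT n j T) (x : ℕ) :
    (∃ i < n - j - 1, T (i + 1, 0) = x) ↔
      (x ∈ Set.Icc 1 n ∧ (∀ c < j, T (0, c) ≠ x) ∧ x ≠ T (1, 1)) := by
  constructor
  · rintro ⟨i, hi, rfl⟩
    refine ⟨hT.2.1.1 (syt19_cell_col (by omega) (by omega)), ?_, ?_⟩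
    · intro c hc he
      have := hT.2.1.2.1 (syt19_cell_row hc) (syt19_cell_col (i := i + 1) (by omega) (by omega))
        he
      rw [Prod.mk.injEq] at this
      omega
    · intro he
      have := hT.2.1.2.1 (syt19_cell_11) (syt19_cell_col (i := i + 1) (by omega) (by omega))
        he.symm
      rw [Prod.mk.injEq] at this
      omega
  · rintro ⟨hx, hrow, hne⟩
    obtain ⟨p, hp, hTp⟩ := hT.2.1.2.2 hx
    obtain ⟨p1, p2⟩ := p
    have hp' : cell n j (p1, p2) := hp
    rcases hp' with ⟨h0, hlt⟩ | ⟨h1', hlt⟩ | ⟨h2', hlt, h0⟩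
    · exfalso
      have h0' : p1 = 0 := h0
      subst h0'
      exact hrow p2 hlt hTp
    · have h1'' : p1 = 1 := h1'
      have hlt' : p2 < 2 := hlt
      subst h1''
      interval_cases p2
      · exact ⟨0, by omega, hTp⟩
      · exact absurd hTp.symm hne
    · have h2'' : 2 ≤ p1 := h2'
      have hlt' : p1 < n - j := hlt
      have h0' : p2 = 0 := h0
      subst h0'
      refine ⟨p1 - 1, by omega, ?_⟩
      have e : p1 - 1 + 1 = p1 := by omega
      rw [e]; exact hTp

lemma syt19_enum_eq (k : ℕ) (f g : ℕ → ℕ)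
    (hf : ∀ i i', i < i' → i' < k → f i < f i')
    (hg : ∀ i i', i < i' → i' < k → g i < g i')
    (h : ∀ x, (∃ i < k, f i = x) ↔ (∃ i < k, g i = x)) :
    ∀ i < k, f i = g i := by
  have hs : ∀ (f : ℕ → ℕ), (∀ i i', i < i' → i' < k → f i < f i') →
      ((List.range k).map f).Pairwise (· < ·) := by
    intro f hf
    rw [List.pairwise_map]
    exact (List.pairwise_lt_range (n := k)).imp_of_mem
      (fun {a b} ha hb hab => hf _ _ hab (List.mem_range.mp hb))
  have hperm : List.Perm ((List.range k).map f) ((List.range k).map g) := by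
    apply List.perm_of_nodup_nodup_toFinset_eq ((hs f hf).nodup) ((hs g hg).nodup)
    ext x
    simp only [List.mem_toFinset, List.mem_map, List.mem_range]
    exact h x
  have hLM : (List.range k).map f = (List.range k).map g :=
    List.Perm.eq_of_pairwise (fun a b _ _ h1 h2 => absurd (h1.trans h2) (lt_irrefl _))
      (hs f hf) (hs g hg) hperm
  intro i hi
  have h1 : ((List.range k).map f)[i]? = some (f i) := by
    simp [List.getElem?_map, List.getElem?_range, hi]
  have h2 : ((List.range k).map g)[i]? = some (g i) := by
    simp [List.getElem?_map, List.getElem?_range, hi]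
  rw [hLM, h2] at h1
  exact (Option.some_injective _ h1).symm

end Aux19

/-- the map `φ : T ↦ (W_T, a_T)` is injective on SYT of shape
`(j,2,1^{n-j-2})`. -/
theorem stmt_19 (n j : ℕ) (hn : 4 ≤ n) (hj1 : 2 ≤ j) (hj2 : j ≤ n - 2) :
    Set.InjOn (fun T : ℕ × ℕ → ℕ => (WT j T, aT T)) {T | IsSYT n j T} := by
  intro T hT' T' hT'' hEq
  replace hT' : IsSYT n j T := hT'
  replace hT'' : IsSYT n j T' := hT''
  simp only [Prod.mk.injEq] at hEq
  obtain ⟨hW, haeq⟩ := hEq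
  have ha : T (1, 1) = T' (1, 1) := haeq
  have hrowiff : ∀ x, (∃ c < j, T (0, c) = x) ↔ (∃ c < j, T' (0, c) = x) := by
    by_cases hcT : ∃ c < j, T (0, c) = T (1, 1) - 1 <;>
      by_cases hcT2 : ∃ c < j, T' (0, c) = T' (1, 1) - 1
    · simp only [WT, if_pos hcT, if_pos hcT2] at hW
      intro x
      rw [← syt19_mem_row_iff, ← syt19_mem_row_iff, hW]
    · exfalso
      simp only [WT, if_pos hcT, if_neg hcT2] at hW
      have hmem : T (1, 1) ∈ T '' {p : ℕ × ℕ | p.1 = 0 ∧ p.2 < j} := by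
        rw [hW]
        exact Or.inl (by rw [ha]; rfl)
      obtain ⟨c, hc, he⟩ := syt19_mem_row_iff.mp hmem
      exact syt19_notin_row hT' hc he
    · exfalso
      simp only [WT, if_neg hcT, if_pos hcT2] at hW
      have hmem : T' (1, 1) ∈ T' '' {p : ℕ × ℕ | p.1 = 0 ∧ p.2 < j} := by
        rw [← hW]
        exact Or.inl (by rw [← ha]; rfl)
      obtain ⟨c, hc, he⟩ := syt19_mem_row_iff.mp hmem
      exact syt19_notin_row hT'' hc he
    · simp only [WT, if_neg hcT, if_neg hcT2] at hW
      have hSS : T '' {p : ℕ × ℕ | p.1 = 0 ∧ 1 ≤ p.2 ∧ p.2 < j} =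
          T' '' {p : ℕ × ℕ | p.1 = 0 ∧ 1 ≤ p.2 ∧ p.2 < j} := by
        have haS : T (1, 1) ∉ T '' {p : ℕ × ℕ | p.1 = 0 ∧ 1 ≤ p.2 ∧ p.2 < j} := by
          intro hmem
          obtain ⟨c, h1, hc, he⟩ := syt19_mem_S_iff.mp hmem
          exact syt19_notin_row hT' hc he
        have haS' : T (1, 1) ∉ T' '' {p : ℕ × ℕ | p.1 = 0 ∧ 1 ≤ p.2 ∧ p.2 < j} := by
          intro hmem
          obtain ⟨c, h1, hc, he⟩ := syt19_mem_S_iff.mp hmem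
          rw [ha] at he
          exact syt19_notin_row hT'' hc he
        ext x
        constructor
        · intro hx
          have hx2 : x ∈ {T' (1, 1)} ∪ T' '' {p : ℕ × ℕ | p.1 = 0 ∧ 1 ≤ p.2 ∧ p.2 < j} := by
            rw [← hW]; exact Or.inr hx
          rcases hx2 with hx2 | hx2
          · exfalso
            have : x = T (1, 1) := by rw [ha]; exact hx2
            exact haS (this ▸ hx)
          · exact hx2
        · intro hx
          have hx2 : x ∈ {T (1, 1)} ∪ T '' {p : ℕ × ℕ | p.1 = 0 ∧ 1 ≤ p.2 ∧ p.2 < j} := by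
            rw [hW]; exact Or.inr hx
          rcases hx2 with hx2 | hx2
          · exfalso
            have : x = T (1, 1) := hx2
            rw [ha] at this
            exact haS' (ha ▸ (this ▸ hx))
          · exact hx2
      intro x
      rw [syt19_row_iff_case2 hn hj1 hj2 hT' x, syt19_row_iff_case2 hn hj1 hj2 hT'' x, hSS]
  have hrowEq : ∀ c < j, T (0, c) = T' (0, c) := by
    refine syt19_enum_eq j _ _ ?_ ?_ hrowiff
    · intro c c' h h'
      exact hT'.2.2.1 (0, c) (0, c') (syt19_cell_row (h.trans h')) (syt19_cell_row h') rfl h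
    · intro c c' h h'
      exact hT''.2.2.1 (0, c) (0, c') (syt19_cell_row (h.trans h')) (syt19_cell_row h') rfl h
  have hcoliff : ∀ x, (∃ i < n - j - 1, T (i + 1, 0) = x) ↔
      (∃ i < n - j - 1, T' (i + 1, 0) = x) := by
    intro x
    rw [syt19_col_char hn hj1 hj2 hT' x, syt19_col_char hn hj1 hj2 hT'' x, ha]
    constructor <;> rintro ⟨h1, h2, h3⟩ <;> refine ⟨h1, ?_, h3⟩
    · intro c hc he
      obtain ⟨c', hc', he'⟩ := (hrowiff x).mpr ⟨c, hc, he⟩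
      exact h2 c' hc' he'
    · intro c hc he
      obtain ⟨c', hc', he'⟩ := (hrowiff x).mp ⟨c, hc, he⟩
      exact h2 c' hc' he'
  have hcolEq : ∀ i < n - j - 1, T (i + 1, 0) = T' (i + 1, 0) := by
    refine syt19_enum_eq (n - j - 1) _ _ ?_ ?_ hcoliff
    · intro i i' h h'
      exact hT'.2.2.2 (i + 1, 0) (i' + 1, 0) (syt19_cell_col (by omega) (by omega))
        (syt19_cell_col (by omega) (by omega)) rfl (by simp; omega)
    · intro i i' h h'
      exact hT''.2.2.2 (i + 1, 0) (i' + 1, 0) (syt19_cell_col (by omega) (by omega))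
        (syt19_cell_col (by omega) (by omega)) rfl (by simp; omega)
  funext p
  obtain ⟨p1, p2⟩ := p
  by_cases hp : cell n j (p1, p2)
  · rcases hp with ⟨h0, hlt⟩ | ⟨h1', hlt⟩ | ⟨h2', hlt, h0⟩
    · have h0' : p1 = 0 := h0
      have hlt' : p2 < j := hlt
      subst h0'
      exact hrowEq p2 hlt'
    · have h1'' : p1 = 1 := h1'
      have hlt' : p2 < 2 := hlt
      subst h1''
      interval_cases p2
      · have := hcolEq 0 (by omega)
        simpa using this
      · exact ha
    · have h2'' : 2 ≤ p1 := h2'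
      have hlt' : p1 < n - j := hlt
      have h0' : p2 = 0 := h0
      subst h0'
      have := hcolEq (p1 - 1) (by omega)
      have e : p1 - 1 + 1 = p1 := by omega
      rwa [e] at this
  · rw [hT'.1 _ hp, hT''.1 _ hp]
end
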